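/- arXiv:math/0601318 — 6 statements merged into one kernel-verified Lean document; each statement's English description precedes it below -/
import Mathlib

section
/- (Hansen–Pedersen trace inequality, finite-dimensional case) Let f : ℝ → ℝ be a convex function, let A_1, …, A_m be n×n Hermitian complex matrices, and let Z_1, …, Z_m be n×n complex matrices with ∑_{i=1}^m Z_iᴴ Z_i = I. Then Tr f(∑_i Z_iᴴ A_i Z_i) ≤ Tr (∑_i Z_iᴴ f(A_i) Z_i). -/
open Matrix

/-- The `j`-th largest eigenvalue of a Hermitian matrix (`0`-indexed, so `eigDesc hA ⟨0, _⟩`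
is the largest), counted with multiplicity. -/
noncomputable def eigDesc {n : ℕ} {A : Matrix (Fin n) (Fin n) ℂ} (hA : A.IsHermitian)
    (j : Fin n) : ℝ :=
  hA.eigenvalues (Tuple.sort hA.eigenvalues j.rev)

/-- Applying a real function to a Hermitian matrix via the functional calculus yields a
Hermitian matrix. -/
lemma isHermitian_cfc {n : ℕ} {A : Matrix (Fin n) (Fin n) ℂ} (hA : A.IsHermitian)
    (f : ℝ → ℝ) : (hA.cfc f).IsHermitian := by
  rw [← hA.cfc_eq]
  exact cfc_predicate f A

lemma isHermitian_half_smul {n : ℕ} {X : Matrix (Fin n) (Fin n) ℂ} (hX : X.IsHermitian) :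
    ((2 : ℝ)⁻¹ • X).IsHermitian := by
  show _ = _
  rw [Matrix.conjTranspose_smul, star_trivial, hX.eq]

lemma isHermitian_sum_conj {m n : ℕ} {A : Fin m → Matrix (Fin n) (Fin n) ℂ}
    (Z : Fin m → Matrix (Fin n) (Fin n) ℂ) (hA : ∀ i, (A i).IsHermitian) :
    (∑ i, (Z i)ᴴ * A i * Z i).IsHermitian := by
  show _ = _
  rw [Matrix.conjTranspose_sum]
  exact Finset.sum_congr rfl fun i _ => (isHermitian_conjTranspose_mul_mul (Z i) (hA i)).eq

open scoped ComplexOrder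

/-- key entry lemma: diagonal entries of `Wᴴ f(X) W` in terms of eigen-data of `X`. -/
lemma HP_entry {n : ℕ} {X : Matrix (Fin n) (Fin n) ℂ} (hX : X.IsHermitian) (g : ℝ → ℝ)
    (W : Matrix (Fin n) (Fin n) ℂ) (j : Fin n) :
    (Wᴴ * hX.cfc g * W) j j =
      ∑ k, (g (hX.eigenvalues k) : ℂ) *
        ((Complex.normSq ((star (hX.eigenvectorUnitary : Matrix (Fin n) (Fin n) ℂ) * W) k j) : ℝ) : ℂ) := by
  set V := (hX.eigenvectorUnitary : Matrix (Fin n) (Fin n) ℂ) with hV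
  have key : Wᴴ * hX.cfc g * W
      = (star V * W)ᴴ * Matrix.diagonal (RCLike.ofReal ∘ g ∘ hX.eigenvalues) * (star V * W) := by
    rw [Matrix.IsHermitian.cfc, Unitary.conjStarAlgAut_apply]
    simp only [Matrix.conjTranspose_mul, Matrix.star_eq_conjTranspose,
      Matrix.conjTranspose_conjTranspose, ← hV, Matrix.mul_assoc]
  rw [key, Matrix.mul_apply]
  refine Finset.sum_congr rfl fun k _ => ?_
  rw [Matrix.mul_diagonal, Matrix.conjTranspose_apply]
  rw [Complex.normSq_eq_conj_mul_self]
  have hconv : (RCLike.ofReal ∘ g ∘ hX.eigenvalues) k = ((g (hX.eigenvalues k) : ℝ) : ℂ) := rfl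
  rw [hconv]
  simp only [starRingEnd_apply]
  ring

/-- trace of `f(X)` is the sum of `f` over eigenvalues. -/
lemma HP_trace_cfc {n : ℕ} {X : Matrix (Fin n) (Fin n) ℂ} (hX : X.IsHermitian) (g : ℝ → ℝ) :
    (hX.cfc g).trace = ∑ k, (g (hX.eigenvalues k) : ℂ) := by
  rw [Matrix.IsHermitian.cfc, Unitary.conjStarAlgAut_apply, Matrix.trace_mul_cycle]
  rw [Unitary.star_mul_self_of_mem (SetLike.coe_mem _), Matrix.one_mul, Matrix.trace_diagonal]
  rfl

/-- **Hansen–Pedersen trace inequality** (finite-dimensional case): if `f` is convex, the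
`Aᵢ` are Hermitian and `∑ᵢ Zᵢᴴ Zᵢ = I`, then
`Tr f(∑ᵢ Zᵢᴴ Aᵢ Zᵢ) ≤ Tr (∑ᵢ Zᵢᴴ f(Aᵢ) Zᵢ)`. -/
theorem trace_cfc_isometric_column_le
    {n m : ℕ} (f : ℝ → ℝ) (hf : ConvexOn ℝ Set.univ f)
    (A : Fin m → Matrix (Fin n) (Fin n) ℂ) (hA : ∀ i, (A i).IsHermitian)
    (Z : Fin m → Matrix (Fin n) (Fin n) ℂ) (hZ : ∑ i, (Z i)ᴴ * Z i = 1) :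
    ((isHermitian_sum_conj Z hA).cfc f).trace ≤
      (∑ i, (Z i)ᴴ * (hA i).cfc f * Z i).trace := by
  set C := ∑ i, (Z i)ᴴ * A i * Z i with hCdef
  set hC := isHermitian_sum_conj Z hA
  set U := (hC.eigenvectorUnitary : Matrix (Fin n) (Fin n) ℂ) with hU
  -- weights
  set p : Fin m → Fin n → Fin n → ℝ := fun i k j =>
    Complex.normSq ((star ((hA i).eigenvectorUnitary : Matrix (Fin n) (Fin n) ℂ)
      * (Z i * U)) k j) with hp
  have hp0 : ∀ i k j, 0 ≤ p i k j := fun i k j => Complex.normSq_nonneg _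
  have hUs : star U * U = 1 := Unitary.star_mul_self_of_mem (SetLike.coe_mem _)
  have hUm : U * star U = 1 := Unitary.mul_star_self_of_mem (SetLike.coe_mem _)
  -- general diagonal entry computation for conjugated sums
  have hdiag : ∀ (g : ℝ → ℝ) (j : Fin n),
      (star U * (∑ i, (Z i)ᴴ * (hA i).cfc g * Z i) * U) j j
        = ∑ i, ∑ k, (g ((hA i).eigenvalues k) : ℂ) * ((p i k j : ℝ) : ℂ) := by
    intro g j
    have : star U * (∑ i, (Z i)ᴴ * (hA i).cfc g * Z i) * U
        = ∑ i, (Z i * U)ᴴ * (hA i).cfc g * (Z i * U) := by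
      rw [Finset.mul_sum, Finset.sum_mul]
      refine Finset.sum_congr rfl fun i _ => ?_
      simp only [Matrix.conjTranspose_mul, Matrix.star_eq_conjTranspose, Matrix.mul_assoc]
    rw [this]
    rw [Matrix.sum_apply]
    exact Finset.sum_congr rfl fun i _ => HP_entry (hA i) g (Z i * U) j
  -- weights sum to one
  have hp1 : ∀ j, ∑ i, ∑ k, p i k j = 1 := by
    intro j
    have h1 : ∀ i, (hA i).cfc (fun _ => 1) = 1 := by
      intro i
      rw [← (hA i).cfc_eq]
      exact cfc_const_one ℝ (A i)
    have := hdiag (fun _ => 1) j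
    simp only [h1] at this
    have h2 : star U * (∑ i, (Z i)ᴴ * (1 : Matrix (Fin n) (Fin n) ℂ) * Z i) * U = 1 := by
      simp only [Matrix.mul_one, hZ]
      simpa using hUs
    rw [h2, Matrix.one_apply_eq] at this
    have : (1 : ℂ) = ((∑ i, ∑ k, p i k j : ℝ) : ℂ) := by
      rw [this]
      push_cast
      simp
    exact_mod_cast this.symm
  -- eigenvalues of C as convex combinations
  have hid : ∀ i, (hA i).cfc id = A i := by
    intro i
    rw [← (hA i).cfc_eq]
    exact cfc_id ℝ (A i)
  have heig : ∀ j, hC.eigenvalues j = ∑ i, ∑ k, p i k j * (hA i).eigenvalues k := by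
    intro j
    have hd := hdiag id j
    simp only [hid] at hd
    have hCU : star U * (∑ i, (Z i)ᴴ * A i * Z i) * U
        = Matrix.diagonal (RCLike.ofReal ∘ hC.eigenvalues) :=
      by have := hC.conjStarAlgAut_star_eigenvectorUnitary; rwa [Unitary.conjStarAlgAut_star_apply] at this
    rw [hCU] at hd
    have hdg : Matrix.diagonal (RCLike.ofReal ∘ hC.eigenvalues) j j
        = ((hC.eigenvalues j : ℝ) : ℂ) := by
      rw [Matrix.diagonal_apply_eq]; rfl
    rw [hdg] at hd
    have : ((hC.eigenvalues j : ℝ) : ℂ)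
        = ((∑ i, ∑ k, p i k j * (hA i).eigenvalues k : ℝ) : ℂ) := by
      rw [hd]
      push_cast
      exact Finset.sum_congr rfl fun i _ => Finset.sum_congr rfl fun k _ => by
        simp [id]; ring
    exact_mod_cast this
  -- LHS trace
  have hLHS : (hC.cfc f).trace = ((∑ j, f (hC.eigenvalues j) : ℝ) : ℂ) := by
    rw [HP_trace_cfc]
    push_cast
    rfl
  -- RHS trace
  have hRHS : (∑ i, (Z i)ᴴ * (hA i).cfc f * Z i).trace
      = ((∑ j, ∑ i, ∑ k, p i k j * f ((hA i).eigenvalues k) : ℝ) : ℂ) := by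
    have hU1 : U * star U = 1 := Unitary.coe_mul_star_self hC.eigenvectorUnitary
    have : (∑ i, (Z i)ᴴ * (hA i).cfc f * Z i).trace
        = (star U * (∑ i, (Z i)ᴴ * (hA i).cfc f * Z i) * U).trace := by
      rw [Matrix.trace_mul_cycle, hU1, Matrix.one_mul]
    rw [this, Matrix.trace, Complex.ofReal_sum]
    refine Finset.sum_congr rfl fun j _ => ?_
    rw [Matrix.diag_apply, hdiag f j]
    push_cast
    refine Finset.sum_congr rfl fun i _ => Finset.sum_congr rfl fun k _ => ?_
    ring
  rw [hLHS, hRHS, Complex.real_le_real]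
  -- Jensen per eigenvalue
  refine Finset.sum_le_sum fun j _ => ?_
  rw [heig j]
  have hJ := hf.map_sum_le (t := (Finset.univ : Finset (Fin m × Fin n)))
    (w := fun ik => p ik.1 ik.2 j) (p := fun ik => (hA ik.1).eigenvalues ik.2)
    (fun ik _ => hp0 ik.1 ik.2 j)
    (by rw [Fintype.sum_prod_type]; exact hp1 j)
    (fun ik _ => Set.mem_univ _)
  simp only [smul_eq_mul] at hJ
  calc f (∑ i, ∑ k, p i k j * (hA i).eigenvalues k)
      = f (∑ ik : Fin m × Fin n, p ik.1 ik.2 j * (hA ik.1).eigenvalues ik.2) := by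
        rw [Fintype.sum_prod_type]
    _ ≤ ∑ ik : Fin m × Fin n, p ik.1 ik.2 j * f ((hA ik.1).eigenvalues ik.2) := hJ
    _ = ∑ i, ∑ k, p i k j * f ((hA i).eigenvalues k) := by rw [Fintype.sum_prod_type]
end

section
/- Let f : ℝ → ℝ be a convex function which is monotone (either nondecreasing on all of ℝ or nonincreasing on all of ℝ), let A be an n×n Hermitian complex matrix, and let Z be an n×k complex matrix which is an isometry (Zᴴ Z = I_k). Then for every k' = 1, …, k, λ_{k'}(f(Zᴴ A Z)) ≤ λ_{k'}(Zᴴ f(A) Z); equivalently, there exists a k×k unitary matrix U such that f(Zᴴ A Z) ≤ U (Zᴴ f(A) Z) Uᴴ in the Loewner order. -/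
open Matrix
open scoped ComplexOrder

namespace Bourin

variable {k : ℕ}

section DotProduct

variable {m : ℕ}

lemma sum_dotProduct' {ι : Type*} (s : Finset ι) (f : ι → Fin m → ℂ) (w : Fin m → ℂ) :
    (∑ i ∈ s, f i) ⬝ᵥ w = ∑ i ∈ s, f i ⬝ᵥ w := by
  simp only [dotProduct, Finset.sum_apply, Finset.sum_mul]
  exact Finset.sum_comm

lemma dotProduct_sum' {ι : Type*} (s : Finset ι) (w : Fin m → ℂ) (f : ι → Fin m → ℂ) :
    w ⬝ᵥ (∑ i ∈ s, f i) = ∑ i ∈ s, w ⬝ᵥ f i := by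
  simp only [dotProduct, Finset.sum_apply, Finset.mul_sum]
  exact Finset.sum_comm

/-- Orthonormal family of vectors in `Fin m → ℂ` (dot-product form). -/
def ON' (u : Fin m → Fin m → ℂ) : Prop :=
  ∀ i j, star (u i) ⬝ᵥ u j = if i = j then 1 else 0

lemma ON'.inj {u : Fin m → Fin m → ℂ} (hu : ON' u) : Function.Injective u := by
  intro i j h
  by_contra hij
  have h1 := hu i j
  rw [h, hu j j, if_pos rfl, if_neg hij] at h1
  exact one_ne_zero h1

lemma dot_expand (M : Matrix (Fin m) (Fin m) ℂ) {u : Fin m → Fin m → ℂ} (hu : ON' u)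
    (d : Fin m → ℝ) (s : Finset (Fin m)) (hd : ∀ i ∈ s, M *ᵥ u i = (d i : ℂ) • u i)
    (c : Fin m → ℂ) :
    star (∑ i ∈ s, c i • u i) ⬝ᵥ (M *ᵥ ∑ i ∈ s, c i • u i)
      = ∑ i ∈ s, ((d i * Complex.normSq (c i) : ℝ) : ℂ) := by
  have hMv : M *ᵥ (∑ i ∈ s, c i • u i) = ∑ i ∈ s, c i • ((d i : ℂ) • u i) := by
    rw [← M.mulVecLin_apply, map_sum]
    refine Finset.sum_congr rfl fun i hi => ?_
    rw [LinearMap.map_smul, M.mulVecLin_apply, hd i hi]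
  rw [hMv, star_sum, sum_dotProduct']
  refine Finset.sum_congr rfl fun i hi => ?_
  rw [dotProduct_sum', Finset.sum_eq_single i]
  · rw [star_smul, smul_dotProduct, dotProduct_smul, dotProduct_smul, hu i i, if_pos rfl]
    simp only [smul_eq_mul, mul_one, Complex.star_def]
    push_cast [Complex.normSq_eq_conj_mul_self]
    ring
  · intro j hj hji
    rw [star_smul, smul_dotProduct, dotProduct_smul, dotProduct_smul, hu i j,
      if_neg (Ne.symm hji)]
    simp
  · intro h; exact absurd hi h

lemma quad_re (M : Matrix (Fin m) (Fin m) ℂ) {u : Fin m → Fin m → ℂ} (hu : ON' u)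
    (d : Fin m → ℝ) (s : Finset (Fin m)) (hd : ∀ i ∈ s, M *ᵥ u i = (d i : ℂ) • u i)
    (c : Fin m → ℂ) :
    (star (∑ i ∈ s, c i • u i) ⬝ᵥ (M *ᵥ ∑ i ∈ s, c i • u i)).re
      = ∑ i ∈ s, d i * Complex.normSq (c i) := by
  rw [dot_expand M hu d s hd c, Complex.re_sum]
  exact Finset.sum_congr rfl fun i _ => Complex.ofReal_re _

lemma norm_re {u : Fin m → Fin m → ℂ} (hu : ON' u) (s : Finset (Fin m)) (c : Fin m → ℂ) :
    (star (∑ i ∈ s, c i • u i) ⬝ᵥ (∑ i ∈ s, c i • u i)).re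
      = ∑ i ∈ s, Complex.normSq (c i) := by
  have := quad_re (1 : Matrix (Fin m) (Fin m) ℂ) hu (fun _ => 1) s (fun i _ => by simp) c
  simpa using this

lemma re_dot_self (v : Fin m → ℂ) :
    (star v ⬝ᵥ v).re = ∑ i, Complex.normSq (v i) := by
  rw [dotProduct, Complex.re_sum]
  refine Finset.sum_congr rfl fun i _ => ?_
  simp [Complex.normSq_apply]

lemma re_dot_self_pos {v : Fin m → ℂ} (hv : v ≠ 0) : 0 < (star v ⬝ᵥ v).re := by
  rw [re_dot_self]
  obtain ⟨i, hi⟩ : ∃ i, v i ≠ 0 := Function.ne_iff.mp hv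
  exact Finset.sum_pos' (fun j _ => Complex.normSq_nonneg _)
    ⟨i, Finset.mem_univ i, by simpa using hi⟩

lemma ON'.li {u : Fin m → Fin m → ℂ} (hu : ON' u) : LinearIndependent ℂ u := by
  rw [Fintype.linearIndependent_iff]
  intro g hg i
  have h := congrArg (fun v => star (u i) ⬝ᵥ v) hg
  simp only [dotProduct_sum' Finset.univ (star (u i)) (fun j => g j • u j)] at h
  rw [Finset.sum_congr rfl (fun j _ => by rw [dotProduct_smul, hu i j])] at h
  simpa [Finset.sum_ite_eq] using h

/-- The span of the vectors of `u` indexed by `s`. -/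
noncomputable def spanFam (u : Fin m → Fin m → ℂ) (s : Finset (Fin m)) :
    Submodule ℂ (Fin m → ℂ) :=
  Submodule.span ℂ (u '' ↑s)

lemma finrank_spanFam {u : Fin m → Fin m → ℂ} (hu : ON' u) (s : Finset (Fin m)) :
    Module.finrank ℂ (spanFam u s) = s.card := by
  have hli : LinearIndependent ℂ ((↑) : (u '' ↑s : Set (Fin m → ℂ)) → (Fin m → ℂ)) :=
    ((linearIndepOn_id_range_iff hu.inj).mpr hu.li).mono (Set.image_subset_range u ↑s)
  have : Fintype (u '' ↑s : Set (Fin m → ℂ)) := (s.finite_toSet.image u).fintype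
  rw [spanFam, finrank_span_set_eq_card hli, Set.toFinset_image,
    Finset.card_image_of_injective _ hu.inj]
  simp

lemma spanFam_rep {u : Fin m → Fin m → ℂ} (hu : ON' u) (s : Finset (Fin m))
    {v : Fin m → ℂ} (hv : v ∈ spanFam u s) :
    ∃ c : Fin m → ℂ, v = ∑ i ∈ s, c i • u i := by
  rw [spanFam, ← Finset.coe_image, Submodule.mem_span_finset] at hv
  obtain ⟨f, -, hf⟩ := hv
  refine ⟨fun i => f (u i), ?_⟩
  rw [← hf, Finset.sum_image (fun x _ y _ h => hu.inj h)]

lemma exists_ne_zero_mem_inf (S T : Submodule ℂ (Fin m → ℂ))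
    (h : m < Module.finrank ℂ S + Module.finrank ℂ T) :
    ∃ v : Fin m → ℂ, v ≠ 0 ∧ v ∈ S ∧ v ∈ T := by
  have h1 : Module.finrank ℂ ↥(S ⊔ T) ≤ m := by
    simpa [Module.finrank_fin_fun] using (S ⊔ T).finrank_le
  have h2 := Submodule.finrank_sup_add_finrank_inf_eq S T
  have h3 : 0 < Module.finrank ℂ ↥(S ⊓ T) := by omega
  haveI h4 : Nontrivial ↥(S ⊓ T) := Module.finrank_pos_iff.mp h3
  obtain ⟨⟨v, hv⟩, hne⟩ := exists_ne (0 : ↥(S ⊓ T))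
  exact ⟨v, fun h0 => hne (Subtype.ext h0), (Submodule.mem_inf.mp hv).1,
    (Submodule.mem_inf.mp hv).2⟩

end DotProduct

section Eigen

/-- The eigenbasis of a Hermitian matrix as a family of plain vectors. -/
noncomputable def eb {M : Matrix (Fin k) (Fin k) ℂ} (hM : M.IsHermitian)
    (i : Fin k) : Fin k → ℂ :=
  ⇑(hM.eigenvectorBasis i)

lemma eb_on {M : Matrix (Fin k) (Fin k) ℂ} (hM : M.IsHermitian) : ON' (eb hM) := by
  intro i j
  have hU : star (hM.eigenvectorUnitary : Matrix (Fin k) (Fin k) ℂ) *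
      (hM.eigenvectorUnitary : Matrix (Fin k) (Fin k) ℂ) = 1 :=
    Unitary.coe_star_mul_self hM.eigenvectorUnitary
  have := congrFun (congrFun hU i) j
  simp only [Matrix.mul_apply, Matrix.one_apply, Matrix.star_apply,
    Matrix.IsHermitian.eigenvectorUnitary_apply] at this
  simpa [dotProduct, eb, Pi.star_apply] using this

lemma eb_eig {M : Matrix (Fin k) (Fin k) ℂ} (hM : M.IsHermitian) (i : Fin k) :
    M *ᵥ eb hM i = ((hM.eigenvalues i : ℝ) : ℂ) • eb hM i := by
  have := hM.mulVec_eigenvectorBasis i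
  rw [eb, this]
  funext x
  simp [Complex.real_smul]

lemma eb_cfc_eig {M : Matrix (Fin k) (Fin k) ℂ} (hM : M.IsHermitian) (f : ℝ → ℝ) (i : Fin k) :
    hM.cfc f *ᵥ eb hM i = ((f (hM.eigenvalues i) : ℝ) : ℂ) • eb hM i := by
  have h1 : (hM.eigenvectorUnitary : Matrix (Fin k) (Fin k) ℂ) *ᵥ Pi.single i 1 = eb hM i :=
    hM.eigenvectorUnitary_mulVec i
  have h2 : (star (hM.eigenvectorUnitary : Matrix (Fin k) (Fin k) ℂ)) *ᵥ eb hM i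
      = Pi.single i 1 := hM.star_eigenvectorUnitary_mulVec i
  rw [Matrix.IsHermitian.cfc, Unitary.conjStarAlgAut_apply, ← Matrix.mulVec_mulVec, ← Matrix.mulVec_mulVec, h2,
    Matrix.diagonal_mulVec_single]
  have h3 : (Pi.single i ((RCLike.ofReal ∘ f ∘ hM.eigenvalues) i * 1) : Fin k → ℂ)
      = ((f (hM.eigenvalues i) : ℝ) : ℂ) • (Pi.single i 1 : Fin k → ℂ) := by
    funext x
    rcases eq_or_ne x i with rfl | hx
    · simp [RCLike.ofReal]
    · simp [Pi.single_eq_of_ne hx]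
  rw [h3, Matrix.mulVec_smul, h1]

/-- The permutation sending `j` to the index of the `j`-th largest eigenvalue. -/
noncomputable def descIdx {M : Matrix (Fin k) (Fin k) ℂ} (hM : M.IsHermitian) :
    Equiv.Perm (Fin k) :=
  Fin.revPerm.trans (Tuple.sort hM.eigenvalues)

lemma eigDesc_eq {M : Matrix (Fin k) (Fin k) ℂ} (hM : M.IsHermitian) (j : Fin k) :
    eigDesc hM j = hM.eigenvalues (descIdx hM j) := rfl

lemma eigDesc_anti {M : Matrix (Fin k) (Fin k) ℂ} (hM : M.IsHermitian) :
    Antitone (eigDesc hM) := by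
  intro j j' h
  rw [eigDesc_eq, eigDesc_eq]
  have := Tuple.monotone_sort hM.eigenvalues (Fin.rev_le_rev.mpr h)
  simpa [descIdx] using this

/-- Indices of the top `k' + 1` eigenvalues. -/
noncomputable def topIdx {M : Matrix (Fin k) (Fin k) ℂ} (hM : M.IsHermitian) (k' : Fin k) :
    Finset (Fin k) :=
  (Finset.Iic k').image (descIdx hM)

noncomputable def botIdx {M : Matrix (Fin k) (Fin k) ℂ} (hM : M.IsHermitian) (k' : Fin k) :
    Finset (Fin k) :=
  (Finset.Ici k').image (descIdx hM)

lemma card_topIdx {M : Matrix (Fin k) (Fin k) ℂ} (hM : M.IsHermitian) (k' : Fin k) :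
    (topIdx hM k').card = (k' : ℕ) + 1 := by
  rw [topIdx, Finset.card_image_of_injective _ (descIdx hM).injective, Fin.card_Iic]

lemma card_botIdx {M : Matrix (Fin k) (Fin k) ℂ} (hM : M.IsHermitian) (k' : Fin k) :
    (botIdx hM k').card = k - (k' : ℕ) := by
  rw [botIdx, Finset.card_image_of_injective _ (descIdx hM).injective, Fin.card_Ici]

lemma topIdx_bound {M : Matrix (Fin k) (Fin k) ℂ} (hM : M.IsHermitian) (k' : Fin k)
    {i : Fin k} (hi : i ∈ topIdx hM k') : eigDesc hM k' ≤ hM.eigenvalues i := by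
  obtain ⟨j, hj, rfl⟩ := Finset.mem_image.mp hi
  rw [← eigDesc_eq]
  exact eigDesc_anti hM (Finset.mem_Iic.mp hj)

lemma botIdx_bound {M : Matrix (Fin k) (Fin k) ℂ} (hM : M.IsHermitian) (k' : Fin k)
    {i : Fin k} (hi : i ∈ botIdx hM k') : hM.eigenvalues i ≤ eigDesc hM k' := by
  obtain ⟨j, hj, rfl⟩ := Finset.mem_image.mp hi
  rw [← eigDesc_eq]
  exact eigDesc_anti hM (Finset.mem_Ici.mp hj)

end Eigen

section CF

/-- Lower bound direction of Courant–Fischer: a `(k'+1)`-dimensional subspace on which the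
quadratic form is at least `C` forces the `k'`-th largest eigenvalue to be at least `C`. -/
lemma cf_lower {M : Matrix (Fin k) (Fin k) ℂ} (hM : M.IsHermitian) (k' : Fin k)
    {u : Fin k → Fin k → ℂ} (hu : ON' u) (s : Finset (Fin k))
    (hcard : (k' : ℕ) + 1 ≤ s.card) (C : ℝ)
    (h : ∀ v, v ∈ spanFam u s → (star v ⬝ᵥ v).re = 1 → C ≤ (star v ⬝ᵥ (M *ᵥ v)).re) :
    C ≤ eigDesc hM k' := by
  obtain ⟨v, hv0, hvs, hvb⟩ := exists_ne_zero_mem_inf (spanFam u s)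
      (spanFam (eb hM) (botIdx hM k')) (by
    rw [finrank_spanFam hu, finrank_spanFam (eb_on hM), card_botIdx]
    have := k'.isLt
    omega)
  have hrpos : 0 < (star v ⬝ᵥ v).re := re_dot_self_pos hv0
  set r : ℝ := (star v ⬝ᵥ v).re with hr
  set t : ℝ := (Real.sqrt r)⁻¹ with ht
  set w : Fin k → ℂ := (t : ℂ) • v with hwdef
  have hsq : Real.sqrt r ≠ 0 := ne_of_gt (Real.sqrt_pos.mpr hrpos)
  have hwv : star w ⬝ᵥ (M *ᵥ w) = ((t * t : ℝ) : ℂ) * (star v ⬝ᵥ (M *ᵥ v)) := by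
    rw [hwdef, star_smul, smul_dotProduct, Matrix.mulVec_smul, dotProduct_smul]
    simp only [smul_eq_mul, Complex.star_def, Complex.conj_ofReal]
    push_cast
    ring
  have hwn : star w ⬝ᵥ w = ((t * t : ℝ) : ℂ) * (star v ⬝ᵥ v) := by
    rw [hwdef, star_smul, smul_dotProduct, dotProduct_smul]
    simp only [smul_eq_mul, Complex.star_def, Complex.conj_ofReal]
    push_cast
    ring
  have htt : t * t * r = 1 := by
    have h5 : t * t = r⁻¹ := by
      rw [ht, ← mul_inv, Real.mul_self_sqrt hrpos.le]
    rw [h5]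
    exact inv_mul_cancel₀ (ne_of_gt hrpos)
  have hw_norm : (star w ⬝ᵥ w).re = 1 := by
    rw [hwn, Complex.re_ofReal_mul, ← hr, htt]
  have h1 : C ≤ (star w ⬝ᵥ (M *ᵥ w)).re :=
    h w (Submodule.smul_mem _ _ hvs) hw_norm
  have hwb : w ∈ spanFam (eb hM) (botIdx hM k') := Submodule.smul_mem _ _ hvb
  obtain ⟨c, hc⟩ := spanFam_rep (eb_on hM) _ hwb
  have h2 : (star w ⬝ᵥ (M *ᵥ w)).re ≤ eigDesc hM k' := by
    rw [hc, quad_re M (eb_on hM) hM.eigenvalues _ (fun i _ => eb_eig hM i) c]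
    have hn : ∑ i ∈ botIdx hM k', Complex.normSq (c i) = 1 := by
      rw [← norm_re (eb_on hM) _ c, ← hc, hw_norm]
    calc ∑ i ∈ botIdx hM k', hM.eigenvalues i * Complex.normSq (c i)
        ≤ ∑ i ∈ botIdx hM k', eigDesc hM k' * Complex.normSq (c i) :=
          Finset.sum_le_sum fun i hi =>
            mul_le_mul_of_nonneg_right (botIdx_bound hM k' hi) (Complex.normSq_nonneg _)
      _ = eigDesc hM k' := by rw [← Finset.mul_sum, hn, mul_one]
  linarith

/-- At least `k' + 1` of the eigenvalues (w.r.t. any orthonormal eigenbasis `u` with values `d`)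
are at least `eigDesc hM k'`. -/
lemma le_card_filter_eigDesc_le {M : Matrix (Fin k) (Fin k) ℂ} (hM : M.IsHermitian)
    {u : Fin k → Fin k → ℂ} (hu : ON' u) {d : Fin k → ℝ}
    (hd : ∀ i, M *ᵥ u i = (d i : ℂ) • u i) (k' : Fin k) :
    (k' : ℕ) + 1 ≤ (Finset.univ.filter (fun i => eigDesc hM k' ≤ d i)).card := by
  by_contra hcon
  push_neg at hcon
  set c := eigDesc hM k' with hcdef
  set s := Finset.univ.filter (fun i => c ≤ d i) with hs
  set t := Finset.univ.filter (fun i => ¬ (c ≤ d i)) with htdef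
  have hst : s.card + t.card = k := by
    rw [hs, htdef, Finset.card_filter_add_card_filter_not]
    simp
  obtain ⟨v, hv0, hvt, hvT⟩ := exists_ne_zero_mem_inf (spanFam u t)
      (spanFam (eb hM) (topIdx hM k')) (by
    rw [finrank_spanFam hu, finrank_spanFam (eb_on hM), card_topIdx]
    have := k'.isLt
    omega)
  obtain ⟨cv, hcv⟩ := spanFam_rep hu t hvt
  obtain ⟨cw, hcw⟩ := spanFam_rep (eb_on hM) _ hvT
  have hnv : 0 < (star v ⬝ᵥ v).re := re_dot_self_pos hv0
  -- strict upper bound from `t`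
  obtain ⟨i₀, hi₀t, hi₀⟩ : ∃ i ∈ t, cv i ≠ 0 := by
    by_contra hall
    push_neg at hall
    apply hv0
    rw [hcv, Finset.sum_congr rfl (fun i hi => by rw [hall i hi, zero_smul])]
    simp
  have hub : (star v ⬝ᵥ (M *ᵥ v)).re < c * (star v ⬝ᵥ v).re := by
    rw [hcv, quad_re M hu d t (fun i _ => hd i) cv, norm_re hu t cv, Finset.mul_sum]
    refine Finset.sum_lt_sum (fun i hi => ?_) ⟨i₀, hi₀t, ?_⟩
    · have : d i ≤ c := le_of_lt (not_le.mp (Finset.mem_filter.mp hi).2)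
      exact mul_le_mul_of_nonneg_right this (Complex.normSq_nonneg _)
    · have h1 : d i₀ < c := not_le.mp (Finset.mem_filter.mp hi₀t).2
      have h2 : 0 < Complex.normSq (cv i₀) := Complex.normSq_pos.mpr hi₀
      exact mul_lt_mul_of_pos_right h1 h2
  have hlb : c * (star v ⬝ᵥ v).re ≤ (star v ⬝ᵥ (M *ᵥ v)).re := by
    rw [hcw, quad_re M (eb_on hM) hM.eigenvalues _ (fun i _ => eb_eig hM i) cw,
      norm_re (eb_on hM) _ cw, Finset.mul_sum]
    exact Finset.sum_le_sum fun i hi =>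
      mul_le_mul_of_nonneg_right (topIdx_bound hM k' hi) (Complex.normSq_nonneg _)
  linarith

end CF

section Jensen

/-- Jensen's trace inequality for a unit vector: `f(⟨w, A w⟩) ≤ ⟨w, f(A) w⟩`. -/
lemma jensen {n : ℕ} {A : Matrix (Fin n) (Fin n) ℂ} (hA : A.IsHermitian) {f : ℝ → ℝ}
    (hf : ConvexOn ℝ Set.univ f) {w : Fin n → ℂ} (hw : (star w ⬝ᵥ w).re = 1) :
    f ((star w ⬝ᵥ (A *ᵥ w)).re) ≤ (star w ⬝ᵥ (hA.cfc f *ᵥ w)).re := by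
  have hspan : spanFam (eb hA) (Finset.univ : Finset (Fin n)) = ⊤ := by
    apply Submodule.eq_top_of_finrank_eq
    rw [finrank_spanFam (eb_on hA)]
    simp [Module.finrank_fin_fun]
  obtain ⟨c, hc⟩ := spanFam_rep (eb_on hA) Finset.univ
    (hspan ▸ Submodule.mem_top (x := w))
  have hq1 : (star w ⬝ᵥ (A *ᵥ w)).re
      = ∑ i, hA.eigenvalues i * Complex.normSq (c i) := by
    rw [hc]; exact quad_re A (eb_on hA) hA.eigenvalues _ (fun i _ => eb_eig hA i) c
  have hq2 : (star w ⬝ᵥ (hA.cfc f *ᵥ w)).re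
      = ∑ i, f (hA.eigenvalues i) * Complex.normSq (c i) := by
    rw [hc]
    exact quad_re (hA.cfc f) (eb_on hA) (fun i => f (hA.eigenvalues i)) _
      (fun i _ => eb_cfc_eig hA f i) c
  have hn : ∑ i, Complex.normSq (c i) = 1 := by
    rw [← hw, hc]; exact (norm_re (eb_on hA) _ c).symm
  rw [hq1, hq2]
  have := hf.map_sum_le (t := Finset.univ) (w := fun i => Complex.normSq (c i))
    (p := hA.eigenvalues) (fun i _ => Complex.normSq_nonneg _) hn
    (fun i _ => Set.mem_univ _)
  simp only [smul_eq_mul] at this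
  calc f (∑ i, hA.eigenvalues i * Complex.normSq (c i))
      = f (∑ i, Complex.normSq (c i) * hA.eigenvalues i) := by
        congr 1; exact Finset.sum_congr rfl fun i _ => mul_comm _ _
    _ ≤ ∑ i, Complex.normSq (c i) * f (hA.eigenvalues i) := this
    _ = ∑ i, f (hA.eigenvalues i) * Complex.normSq (c i) :=
        Finset.sum_congr rfl fun i _ => mul_comm _ _

/-- A monotone (either way) function applied to a convex combination is at least the
minimum of its values. -/
lemma mono_comb_ge {f : ℝ → ℝ} (hmono : Monotone f ∨ Antitone f) {s : Finset (Fin k)}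
    (hs : s.Nonempty) {t : Fin k → ℝ} (ht0 : ∀ i ∈ s, 0 ≤ t i) (ht1 : ∑ i ∈ s, t i = 1)
    {x : Fin k → ℝ} {c : ℝ} (hx : ∀ i ∈ s, c ≤ f (x i)) :
    c ≤ f (∑ i ∈ s, x i * t i) := by
  obtain ⟨i₁, hi₁, hmin⟩ := s.exists_min_image x hs
  obtain ⟨i₂, hi₂, hmax⟩ := s.exists_max_image x hs
  have hlo : x i₁ ≤ ∑ i ∈ s, x i * t i := by
    calc x i₁ = ∑ i ∈ s, x i₁ * t i := by rw [← Finset.mul_sum, ht1, mul_one]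
      _ ≤ _ := Finset.sum_le_sum fun i hi =>
          mul_le_mul_of_nonneg_right (hmin i hi) (ht0 i hi)
  have hhi : ∑ i ∈ s, x i * t i ≤ x i₂ := by
    calc ∑ i ∈ s, x i * t i ≤ ∑ i ∈ s, x i₂ * t i :=
          Finset.sum_le_sum fun i hi =>
            mul_le_mul_of_nonneg_right (hmax i hi) (ht0 i hi)
      _ = x i₂ := by rw [← Finset.mul_sum, ht1, mul_one]
  rcases hmono with hm | hm
  · exact le_trans (hx i₁ hi₁) (hm hlo)
  · exact le_trans (hx i₂ hi₂) (hm hhi)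

end Jensen

section Compress

lemma quad_compress {n : ℕ} (N : Matrix (Fin n) (Fin n) ℂ) (Z : Matrix (Fin n) (Fin k) ℂ)
    (v : Fin k → ℂ) :
    star v ⬝ᵥ ((Zᴴ * N * Z) *ᵥ v) = star (Z *ᵥ v) ⬝ᵥ (N *ᵥ (Z *ᵥ v)) := by
  rw [← Matrix.mulVec_mulVec, ← Matrix.mulVec_mulVec, Matrix.dotProduct_mulVec (star v) Zᴴ,
    ← Matrix.star_mulVec]

lemma norm_compress {n : ℕ} (Z : Matrix (Fin n) (Fin k) ℂ) (hZ : Zᴴ * Z = 1)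
    (v : Fin k → ℂ) : star (Z *ᵥ v) ⬝ᵥ (Z *ᵥ v) = star v ⬝ᵥ v := by
  have := quad_compress (1 : Matrix (Fin n) (Fin n) ℂ) Z v
  rw [Matrix.mul_one, hZ] at this
  simp only [Matrix.one_mulVec] at this
  exact this.symm

end Compress


section Unitary

lemma perm_conj_diag (e : Equiv.Perm (Fin k)) (d : Fin k → ℂ) :
    (Matrix.of fun i j => if e i = j then (1 : ℂ) else 0) * Matrix.diagonal d *
      star (Matrix.of fun i j => if e i = j then (1 : ℂ) else 0)
      = Matrix.diagonal (fun i => d (e i)) := by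
  ext i j
  rw [Matrix.mul_apply, Finset.sum_eq_single (e i)]
  · rw [Matrix.mul_diagonal]
    simp only [Matrix.star_eq_conjTranspose, Matrix.conjTranspose_apply, Matrix.of_apply,
      if_pos rfl, one_mul]
    by_cases hij : i = j
    · subst hij; simp
    · rw [if_neg (fun h : e j = e i => hij (e.injective h).symm),
        Matrix.diagonal_apply_ne _ hij]
      simp
  · intro b _ hb
    rw [Matrix.mul_diagonal]
    simp only [Matrix.of_apply, if_neg (Ne.symm hb), zero_mul]
  · intro h
    exact absurd (Finset.mem_univ _) h

lemma perm_mul_star (e : Equiv.Perm (Fin k)) :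
    (Matrix.of fun i j => if e i = j then (1 : ℂ) else 0) *
      star (Matrix.of fun i j => if e i = j then (1 : ℂ) else 0) = 1 := by
  have h := perm_conj_diag e (fun _ => (1 : ℂ))
  simpa [Matrix.diagonal_one] using h

/-- Given eigenvalue domination in decreasing order, there is a unitary `U` with
`X ≤ U Y Uᴴ`. -/
lemma exists_unitary {X Y : Matrix (Fin k) (Fin k) ℂ} (hX : X.IsHermitian)
    (hY : Y.IsHermitian) (h : ∀ j, eigDesc hX j ≤ eigDesc hY j) :
    ∃ U : Matrix (Fin k) (Fin k) ℂ, U ∈ Matrix.unitaryGroup (Fin k) ℂ ∧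
      (U * Y * Uᴴ - X).PosSemidef := by
  set V : Matrix (Fin k) (Fin k) ℂ := (hX.eigenvectorUnitary : Matrix (Fin k) (Fin k) ℂ) with hVdef
  set W : Matrix (Fin k) (Fin k) ℂ := (hY.eigenvectorUnitary : Matrix (Fin k) (Fin k) ℂ) with hWdef
  set e : Equiv.Perm (Fin k) := (descIdx hX).symm.trans (descIdx hY) with hedef
  set P : Matrix (Fin k) (Fin k) ℂ := Matrix.of fun i j => if e i = j then 1 else 0 with hPdef
  have hV1 : V * star V = 1 := Unitary.coe_mul_star_self hX.eigenvectorUnitary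
  have hV2 : star V * V = 1 := Unitary.coe_star_mul_self hX.eigenvectorUnitary
  have hW2 : star W * W = 1 := Unitary.coe_star_mul_self hY.eigenvectorUnitary
  have hP1 : P * star P = 1 := perm_mul_star e
  set U : Matrix (Fin k) (Fin k) ℂ := V * P * star W with hUdef
  have hUU : U * star U = 1 := by
    calc U * star U = V * (P * (star W * W * star P)) * star V := by
          simp only [hUdef, Matrix.star_mul, star_star, Matrix.mul_assoc]
      _ = 1 := by rw [hW2, Matrix.one_mul, hP1, Matrix.mul_one, hV1]
  have hUmem : U ∈ Matrix.unitaryGroup (Fin k) ℂ := by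
    rw [Matrix.mem_unitaryGroup_iff]
    exact hUU
  have hYd : star W * Y * W = Matrix.diagonal (RCLike.ofReal ∘ hY.eigenvalues) :=
    by rw [← hY.conjStarAlgAut_star_eigenvectorUnitary, Unitary.conjStarAlgAut_apply,
      Unitary.coe_star, star_star]
  have hkey : U * Y * star U
      = V * Matrix.diagonal (fun i => (RCLike.ofReal ∘ hY.eigenvalues) (e i)) * star V := by
    calc U * Y * star U = V * (P * Matrix.diagonal (RCLike.ofReal ∘ hY.eigenvalues) * star P)
          * star V := by
          rw [← hYd]
          simp only [hUdef, Matrix.star_mul, star_star, Matrix.mul_assoc]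
      _ = _ := by rw [perm_conj_diag e]
  have hXd : X = V * Matrix.diagonal (RCLike.ofReal ∘ hX.eigenvalues) * star V :=
    hX.spectral_theorem
  have hdiff : U * Y * star U - X
      = V * Matrix.diagonal (fun i =>
          ((hY.eigenvalues (e i) - hX.eigenvalues i : ℝ) : ℂ)) * star V := by
    have hdd : (fun i => (RCLike.ofReal ∘ hY.eigenvalues) (e i) - (RCLike.ofReal ∘ hX.eigenvalues) i)
        = fun i => ((hY.eigenvalues (e i) - hX.eigenvalues i : ℝ) : ℂ) := by
      funext i
      simp [RCLike.ofReal]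
    rw [hkey]
    conv_lhs => rw [hXd]
    rw [← Matrix.sub_mul, ← Matrix.mul_sub, Matrix.diagonal_sub, hdd]
  have hpsd : (U * Y * star U - X).PosSemidef := by
    rw [hdiff]
    have hnn : ∀ i, (0 : ℂ) ≤ ((hY.eigenvalues (e i) - hX.eigenvalues i : ℝ) : ℂ) := by
      intro i
      rw [Complex.zero_le_real]
      have h1 : hY.eigenvalues (e i) = eigDesc hY ((descIdx hX).symm i) := rfl
      have h2 : hX.eigenvalues i = eigDesc hX ((descIdx hX).symm i) := by
        rw [eigDesc_eq, Equiv.apply_symm_apply]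
      rw [h1, h2, sub_nonneg]
      exact h _
    have := (Matrix.posSemidef_diagonal_iff.mpr hnn).mul_mul_conjTranspose_same V
    rwa [Matrix.star_eq_conjTranspose]
  refine ⟨U, hUmem, ?_⟩
  rwa [← Matrix.star_eq_conjTranspose]


end Unitary

section Main

/-- Part 1: eigenvalue domination `λ_{k'}(f(Zᴴ A Z)) ≤ λ_{k'}(Zᴴ f(A) Z)`. -/
lemma eigDesc_le {n k : ℕ} (f : ℝ → ℝ) (hf : ConvexOn ℝ Set.univ f)
    (hmono : Monotone f ∨ Antitone f)
    (A : Matrix (Fin n) (Fin n) ℂ) (hA : A.IsHermitian)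
    (Z : Matrix (Fin n) (Fin k) ℂ) (hZ : Zᴴ * Z = 1) (k' : Fin k) :
    eigDesc (isHermitian_cfc (isHermitian_conjTranspose_mul_mul Z hA) f) k' ≤
      eigDesc (isHermitian_conjTranspose_mul_mul Z (isHermitian_cfc hA f)) k' := by
  classical
  set B : Matrix (Fin k) (Fin k) ℂ := Zᴴ * A * Z with hBdef
  have hB : B.IsHermitian := isHermitian_conjTranspose_mul_mul Z hA
  have hfB : (hB.cfc f).IsHermitian := isHermitian_cfc hB f
  set c : ℝ := eigDesc hfB k' with hcdef
  set s : Finset (Fin k) :=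
    Finset.univ.filter (fun i => eigDesc hfB k' ≤ f (hB.eigenvalues i)) with hsdef
  have hcard : (k' : ℕ) + 1 ≤ s.card :=
    le_card_filter_eigDesc_le hfB (eb_on hB) (fun i => eb_cfc_eig hB f i) k'
  have hgoal : c ≤ eigDesc (isHermitian_conjTranspose_mul_mul Z (isHermitian_cfc hA f)) k' := by
    apply cf_lower (isHermitian_conjTranspose_mul_mul Z (isHermitian_cfc hA f)) k'
      (eb_on hB) s hcard c
    intro v hv hnorm
    obtain ⟨cv, hcv⟩ := spanFam_rep (eb_on hB) s hv
    have hZnorm : (star (Z *ᵥ v) ⬝ᵥ (Z *ᵥ v)).re = 1 := by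
      rw [norm_compress Z hZ v]; exact hnorm
    have hjen := jensen hA hf hZnorm
    have hq : (star v ⬝ᵥ ((Zᴴ * hA.cfc f * Z) *ᵥ v)).re
        = (star (Z *ᵥ v) ⬝ᵥ (hA.cfc f *ᵥ (Z *ᵥ v))).re :=
      congrArg Complex.re (quad_compress (hA.cfc f) Z v)
    have hqB : (star (Z *ᵥ v) ⬝ᵥ (A *ᵥ (Z *ᵥ v))).re = (star v ⬝ᵥ (B *ᵥ v)).re :=
      (congrArg Complex.re (quad_compress A Z v)).symm
    have hBv : (star v ⬝ᵥ (B *ᵥ v)).re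
        = ∑ i ∈ s, hB.eigenvalues i * Complex.normSq (cv i) := by
      rw [hcv]
      exact quad_re B (eb_on hB) hB.eigenvalues s (fun i _ => eb_eig hB i) cv
    have hn1 : ∑ i ∈ s, Complex.normSq (cv i) = 1 := by
      rw [← hnorm, hcv]
      exact (norm_re (eb_on hB) s cv).symm
    have hsne : s.Nonempty := Finset.card_pos.mp (lt_of_lt_of_le (Nat.succ_pos _) hcard)
    have hcomb : c ≤ f (∑ i ∈ s, hB.eigenvalues i * Complex.normSq (cv i)) := by
      refine mono_comb_ge hmono hsne (fun i _ => Complex.normSq_nonneg _) hn1 ?_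
      intro i hi
      exact (Finset.mem_filter.mp hi).2
    calc c ≤ f ((star v ⬝ᵥ (B *ᵥ v)).re) := by rw [hBv]; exact hcomb
      _ = f ((star (Z *ᵥ v) ⬝ᵥ (A *ᵥ (Z *ᵥ v))).re) := by rw [hqB]
      _ ≤ (star (Z *ᵥ v) ⬝ᵥ (hA.cfc f *ᵥ (Z *ᵥ v))).re := hjen
      _ = (star v ⬝ᵥ ((Zᴴ * hA.cfc f * Z) *ᵥ v)).re := hq.symm
  exact hgoal

end Main

end Bourin

/-- **Inequality (4) of Bourin.** If `f` is convex and monotone, `A` is Hermitian and `Z`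
is an isometry, then `λ_{k'}(f(Zᴴ A Z)) ≤ λ_{k'}(Zᴴ f(A) Z)` for every `k'`;
equivalently, there is a unitary `U` with `f(Zᴴ A Z) ≤ U (Zᴴ f(A) Z) Uᴴ`. -/
theorem cfc_compression_le_unitary_conj_of_monotone
    {n k : ℕ} (f : ℝ → ℝ) (hf : ConvexOn ℝ Set.univ f)
    (hmono : Monotone f ∨ Antitone f)
    (A : Matrix (Fin n) (Fin n) ℂ) (hA : A.IsHermitian)
    (Z : Matrix (Fin n) (Fin k) ℂ) (hZ : Zᴴ * Z = 1) :
    (∀ k' : Fin k,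
      eigDesc (isHermitian_cfc (isHermitian_conjTranspose_mul_mul Z hA) f) k' ≤
        eigDesc (isHermitian_conjTranspose_mul_mul Z (isHermitian_cfc hA f)) k') ∧
    ∃ U : Matrix (Fin k) (Fin k) ℂ, U ∈ Matrix.unitaryGroup (Fin k) ℂ ∧
      (U * (Zᴴ * hA.cfc f * Z) * Uᴴ -
        (isHermitian_conjTranspose_mul_mul Z hA).cfc f).PosSemidef := by
  have h1 := fun k' => Bourin.eigDesc_le f hf hmono A hA Z hZ k'
  refine ⟨h1, ?_⟩
  exact Bourin.exists_unitary
    (isHermitian_cfc (isHermitian_conjTranspose_mul_mul Z hA) f)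
    (isHermitian_conjTranspose_mul_mul Z (isHermitian_cfc hA f)) h1
end

section
/- Let A be an n×n Hermitian complex matrix, let f : ℝ → ℝ be a convex function, and let h ∈ ℂⁿ be a unit vector (‖h‖ = 1). Then f(⟨h, A h⟩) ≤ ⟨h, f(A) h⟩, where ⟨h, A h⟩ denotes the (real) quadratic form value hᴴ A h. -/
open Matrix

lemma quad_helper {n : ℕ} (U : Matrix (Fin n) (Fin n) ℂ) (d : Fin n → ℝ) (h : Fin n → ℂ) :
    (star h ⬝ᵥ (U * diagonal (fun i => (d i : ℂ)) * star U).mulVec h).re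
      = ∑ i, d i * ‖(star U *ᵥ h) i‖ ^ 2 := by
  set g := star U *ᵥ h with hg
  have h1 : (U * diagonal (fun i => (d i : ℂ)) * star U) *ᵥ h
      = U *ᵥ (diagonal (fun i => (d i : ℂ)) *ᵥ g) := by
    rw [← mulVec_mulVec, ← mulVec_mulVec]
  have h2 : star h ᵥ* U = star g := by
    rw [hg, star_mulVec, star_eq_conjTranspose, conjTranspose_conjTranspose]
  rw [h1, dotProduct_mulVec, h2]
  have : star g ⬝ᵥ (diagonal (fun i => (d i : ℂ)) *ᵥ g)
      = ∑ i, ((d i * ‖g i‖ ^ 2 : ℝ) : ℂ) := by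
    simp only [dotProduct, mulVec_diagonal]
    congr 1; ext i
    push_cast
    rw [Pi.star_apply, Complex.star_def]
    rw [show (starRingEnd ℂ) (g i) * ((d i : ℂ) * g i)
        = (d i : ℂ) * ((starRingEnd ℂ) (g i) * g i) by ring, Complex.conj_mul']
  rw [this]
  rw [← Complex.ofReal_sum]
  exact Complex.ofReal_re _

/-- **Jensen inequality for quadratic forms.** If `A` is Hermitian, `f` is convex and
`h` is a unit vector, then `f(⟨h, A h⟩) ≤ ⟨h, f(A) h⟩`. -/
theorem cfc_quadratic_form_jensen
    {n : ℕ} (A : Matrix (Fin n) (Fin n) ℂ) (hA : A.IsHermitian)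
    (f : ℝ → ℝ) (hf : ConvexOn ℝ Set.univ f)
    (h : Fin n → ℂ) (hh : ∑ i, ‖h i‖ ^ 2 = 1) :
    f (star h ⬝ᵥ A.mulVec h).re ≤ (star h ⬝ᵥ (hA.cfc f).mulVec h).re := by
  set U : Matrix (Fin n) (Fin n) ℂ := (hA.eigenvectorUnitary : Matrix (Fin n) (Fin n) ℂ) with hU
  set g := star U *ᵥ h with hg
  have hw : ∑ i, ‖g i‖ ^ 2 = 1 := by
    have h1 := quad_helper U (fun _ => (1 : ℝ)) h
    simp only [one_mul, Complex.ofReal_one, diagonal_one, mul_one] at h1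
    have hUU : U * star U = 1 := (Matrix.mem_unitaryGroup_iff).mp hA.eigenvectorUnitary.2
    rw [hUU] at h1
    rw [← hg] at h1
    rw [← h1, one_mulVec]
    simp only [dotProduct, Pi.star_apply, Complex.star_def, Complex.conj_mul']
    simp only [← Complex.ofReal_pow, ← Complex.ofReal_sum, Complex.ofReal_re]
    exact hh
  have hA' : (star h ⬝ᵥ A.mulVec h).re = ∑ i, hA.eigenvalues i * ‖g i‖ ^ 2 := by
    conv_lhs => rw [hA.spectral_theorem]
    exact quad_helper U hA.eigenvalues h
  have hF : (star h ⬝ᵥ (hA.cfc f).mulVec h).re = ∑ i, f (hA.eigenvalues i) * ‖g i‖ ^ 2 := by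
    rw [Matrix.IsHermitian.cfc]
    exact quad_helper U (f ∘ hA.eigenvalues) h
  rw [hA', hF]
  have := hf.map_sum_le (t := Finset.univ) (w := fun i => ‖g i‖ ^ 2)
    (p := hA.eigenvalues) (fun i _ => by positivity) hw (fun i _ => Set.mem_univ _)
  simpa [smul_eq_mul, mul_comm] using this
end

section
/- Let f : ℝ → ℝ be a convex function and let A, B be n×n Hermitian complex matrices. Then Tr f((A+B)/2) ≤ Tr ((f(A)+f(B))/2). -/
open Matrix

open scoped ComplexOrder

/-- Trace of the functional calculus is the sum of `f` applied to eigenvalues. -/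
lemma trace_cfc_eq_sum {n : ℕ} {A : Matrix (Fin n) (Fin n) ℂ} (hA : A.IsHermitian)
    (f : ℝ → ℝ) : (hA.cfc f).trace = ∑ i, (f (hA.eigenvalues i) : ℂ) := by
  rw [Matrix.IsHermitian.cfc, Unitary.conjStarAlgAut_apply, Matrix.trace_mul_cycle,
    Matrix.mem_unitaryGroup_iff'.mp (hA.eigenvectorUnitary).2, one_mul, Matrix.trace_diagonal]
  rfl

/-- **Peierls' inequality.** For any unitary `U`, the sum of `f` applied to the diagonal
elements of `Uᴴ A U` is at most `Tr f(A)` when `f` is convex. -/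
lemma peierls {n : ℕ} {A : Matrix (Fin n) (Fin n) ℂ} (hA : A.IsHermitian)
    {f : ℝ → ℝ} (hf : ConvexOn ℝ Set.univ f) (U : Matrix (Fin n) (Fin n) ℂ)
    (hU : U ∈ Matrix.unitaryGroup (Fin n) ℂ) :
    ∑ i, f (((star U * A * U) i i).re) ≤ ∑ j, f (hA.eigenvalues j) := by
  set V : Matrix (Fin n) (Fin n) ℂ := (hA.eigenvectorUnitary : Matrix (Fin n) (Fin n) ℂ) with hV
  set W : Matrix (Fin n) (Fin n) ℂ := star U * V with hWdef
  have hWmem : W ∈ Matrix.unitaryGroup (Fin n) ℂ :=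
    mul_mem (Unitary.star_mem hU) (hA.eigenvectorUnitary).2
  set p : Fin n → Fin n → ℝ := fun i j => Complex.normSq (W i j) with hp
  have hrow : ∀ i, ∑ j, p i j = 1 := by
    intro i
    have h1 : (W * star W) i i = 1 := by
      rw [Matrix.mem_unitaryGroup_iff.mp hWmem, Matrix.one_apply_eq]
    rw [Matrix.mul_apply] at h1
    have : ∑ j, (p i j : ℂ) = 1 := by
      rw [← h1]
      refine Finset.sum_congr rfl fun j _ => ?_
      rw [Matrix.star_apply, ← Complex.mul_conj]
      rfl
    exact_mod_cast this
  have hcol : ∀ j, ∑ i, p i j = 1 := by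
    intro j
    have h1 : (star W * W) j j = 1 := by
      rw [Matrix.mem_unitaryGroup_iff'.mp hWmem, Matrix.one_apply_eq]
    rw [Matrix.mul_apply] at h1
    have : ∑ i, (p i j : ℂ) = 1 := by
      rw [← h1]
      refine Finset.sum_congr rfl fun i _ => ?_
      rw [Matrix.star_apply, mul_comm, ← Complex.mul_conj]
      rfl
    exact_mod_cast this
  have hdiag : ∀ i, ((star U * A * U) i i).re = ∑ j, p i j * hA.eigenvalues j := by
    intro i
    have hAe : star U * A * U
        = W * Matrix.diagonal (Complex.ofReal ∘ hA.eigenvalues) * star W := by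
      conv_lhs => rw [hA.spectral_theorem, Unitary.conjStarAlgAut_apply]
      rw [hWdef, Matrix.star_mul, star_star]
      simp only [Matrix.mul_assoc]
      rfl
    rw [hAe, Matrix.mul_apply]
    have : ∀ j, (W * Matrix.diagonal (Complex.ofReal ∘ hA.eigenvalues)) i j * star W j i
        = ((p i j * hA.eigenvalues j : ℝ) : ℂ) := by
      intro j
      rw [Matrix.mul_diagonal, Matrix.star_apply]
      simp only [Function.comp_apply]
      push_cast
      rw [hp]
      rw [show W i j * (hA.eigenvalues j : ℂ) * star (W i j)
          = W i j * star (W i j) * (hA.eigenvalues j : ℂ) by ring]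
      rw [show star (W i j) = starRingEnd ℂ (W i j) from rfl, Complex.mul_conj]
    rw [Finset.sum_congr rfl fun j _ => this j, ← Complex.ofReal_sum, Complex.ofReal_re]
  calc ∑ i, f (((star U * A * U) i i).re)
      ≤ ∑ i, ∑ j, p i j * f (hA.eigenvalues j) := by
        refine Finset.sum_le_sum fun i _ => ?_
        rw [hdiag i]
        have := hf.map_sum_le (t := Finset.univ) (w := p i) (p := hA.eigenvalues)
          (fun j _ => Complex.normSq_nonneg _) (hrow i) (fun j _ => Set.mem_univ _)
        simpa [smul_eq_mul] using this
    _ = ∑ j, (∑ i, p i j) * f (hA.eigenvalues j) := by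
        rw [Finset.sum_comm]
        exact Finset.sum_congr rfl fun j _ => (Finset.sum_mul ..).symm
    _ = ∑ j, f (hA.eigenvalues j) := by
        exact Finset.sum_congr rfl fun j _ => by rw [hcol j, one_mul]

/-- **Von Neumann-type trace inequality (2).** If `f` is convex and `A, B` are Hermitian,
then `Tr f((A+B)/2) ≤ Tr ((f(A)+f(B))/2)`. -/
theorem trace_cfc_mean_le
    {n : ℕ} (f : ℝ → ℝ) (hf : ConvexOn ℝ Set.univ f)
    (A B : Matrix (Fin n) (Fin n) ℂ) (hA : A.IsHermitian) (hB : B.IsHermitian) :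
    ((isHermitian_half_smul (hA.add hB)).cfc f).trace ≤
      ((2 : ℝ)⁻¹ • (hA.cfc f + hB.cfc f)).trace := by
  have hC := isHermitian_half_smul (hA.add hB)
  set U : Matrix (Fin n) (Fin n) ℂ := (hC.eigenvectorUnitary : Matrix (Fin n) (Fin n) ℂ) with hUdef
  have hU : U ∈ Matrix.unitaryGroup (Fin n) ℂ := (hC.eigenvectorUnitary).2
  -- eigenvalues of C are means of diagonal entries
  have hmu : ∀ i, hC.eigenvalues i
      = 2⁻¹ * ((star U * A * U) i i).re + 2⁻¹ * ((star U * B * U) i i).re := by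
    intro i
    have h1 : (star U * ((2 : ℝ)⁻¹ • (A + B)) * U) i i = (hC.eigenvalues i : ℂ) := by
      have hd := Matrix.IsHermitian.conjStarAlgAut_star_eigenvectorUnitary hC
      rw [Unitary.conjStarAlgAut_star_apply] at hd
      rw [hd]
      simp [Matrix.diagonal_apply_eq]
    have h2 : star U * ((2 : ℝ)⁻¹ • (A + B)) * U
        = (2 : ℝ)⁻¹ • (star U * A * U + star U * B * U) := by
      rw [Matrix.mul_smul, Matrix.smul_mul, Matrix.mul_add, Matrix.add_mul]
    rw [h2] at h1
    have := congrArg Complex.re h1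
    simpa [Complex.smul_re, mul_add] using this.symm
  -- the real inequality
  have key : ∑ i, f (hC.eigenvalues i)
      ≤ 2⁻¹ * (∑ j, f (hA.eigenvalues j)) + 2⁻¹ * (∑ j, f (hB.eigenvalues j)) := by
    calc ∑ i, f (hC.eigenvalues i)
        ≤ ∑ i, (2⁻¹ * f (((star U * A * U) i i).re)
            + 2⁻¹ * f (((star U * B * U) i i).re)) := by
          refine Finset.sum_le_sum fun i _ => ?_
          rw [hmu i]
          have := hf.2 (Set.mem_univ (((star U * A * U) i i).re))
            (Set.mem_univ (((star U * B * U) i i).re))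
            (by norm_num : (0:ℝ) ≤ 2⁻¹) (by norm_num : (0:ℝ) ≤ 2⁻¹) (by norm_num)
          simpa [smul_eq_mul] using this
      _ = 2⁻¹ * (∑ i, f (((star U * A * U) i i).re))
            + 2⁻¹ * (∑ i, f (((star U * B * U) i i).re)) := by
          rw [Finset.sum_add_distrib, Finset.mul_sum, Finset.mul_sum]
      _ ≤ _ :=
          add_le_add (mul_le_mul_of_nonneg_left (peierls hA hf U hU) (by norm_num))
            (mul_le_mul_of_nonneg_left (peierls hB hf U hU) (by norm_num))
  -- transfer to complex traces
  rw [trace_cfc_eq_sum hC f, Matrix.trace_smul, Matrix.trace_add,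
    trace_cfc_eq_sum hA f, trace_cfc_eq_sum hB f]
  rw [← Complex.ofReal_sum]
  have : ((2 : ℝ)⁻¹ : ℝ) • ((∑ j, (f (hA.eigenvalues j) : ℂ)) + ∑ j, (f (hB.eigenvalues j) : ℂ))
      = ((2⁻¹ * (∑ j, f (hA.eigenvalues j)) + 2⁻¹ * (∑ j, f (hB.eigenvalues j)) : ℝ) : ℂ) := by
    push_cast
    rw [Complex.real_smul]
    push_cast
    ring
  rw [this]
  exact Complex.real_le_real.mpr key
end

section
/- Let A and B be n×n Hermitian complex matrices. Then there exist n×n unitary matrices U and V such that |A+B| ≤ U |A| Uᴴ + V |B| Vᴴ in the Loewner order. -/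
open Matrix
open scoped ComplexOrder

namespace AbsAddAux
variable {n : ℕ}

def sqnorm (x : Fin n → ℂ) : ℝ := ∑ i, Complex.normSq (x i)

lemma isHermitianHalfSmulTmp {X : Matrix (Fin n) (Fin n) ℂ} (hX : X.IsHermitian) :
    ((2 : ℝ)⁻¹ • X).IsHermitian := by
  show _ = _
  rw [Matrix.conjTranspose_smul, star_trivial, hX.eq]

lemma sqnorm_nonneg (x : Fin n → ℂ) : 0 ≤ sqnorm x :=
  Finset.sum_nonneg fun _ _ => Complex.normSq_nonneg _

lemma star_dot_self (x : Fin n → ℂ) : star x ⬝ᵥ x = (sqnorm x : ℂ) := by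
  unfold sqnorm
  push_cast
  simp [dotProduct, Complex.normSq_eq_conj_mul_self, Complex.star_def]

lemma quad_diag (d : Fin n → ℝ) (y : Fin n → ℂ) :
    star y ⬝ᵥ (Matrix.diagonal (fun i => (d i : ℂ)) *ᵥ y)
      = ((∑ i, d i * Complex.normSq (y i) : ℝ) : ℂ) := by
  push_cast
  unfold dotProduct
  refine Finset.sum_congr rfl fun i _ => ?_
  rw [Matrix.mulVec_diagonal, Complex.normSq_eq_conj_mul_self]
  simp [Complex.star_def]
  ring

lemma dot_conj (Q N : Matrix (Fin n) (Fin n) ℂ) (x : Fin n → ℂ) :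
    star x ⬝ᵥ (Q * N * Qᴴ) *ᵥ x = star (Qᴴ *ᵥ x) ⬝ᵥ (N *ᵥ (Qᴴ *ᵥ x)) := by
  rw [← Matrix.mulVec_mulVec, ← Matrix.mulVec_mulVec, Matrix.dotProduct_mulVec,
    Matrix.star_mulVec, Matrix.conjTranspose_conjTranspose]

lemma sqnorm_mulVec_isometry {M : Matrix (Fin n) (Fin n) ℂ} (hM : Mᴴ * M = 1)
    (x : Fin n → ℂ) : sqnorm (M *ᵥ x) = sqnorm x := by
  have h1 : star (M *ᵥ x) ⬝ᵥ (M *ᵥ x) = star x ⬝ᵥ x := by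
    rw [Matrix.star_mulVec, ← Matrix.dotProduct_mulVec, Matrix.mulVec_mulVec, hM,
      Matrix.one_mulVec]
  rw [star_dot_self, star_dot_self] at h1
  exact_mod_cast h1

lemma cs (x y : Fin n → ℂ) :
    ‖star x ⬝ᵥ y‖ ≤ Real.sqrt (sqnorm x) * Real.sqrt (sqnorm y) := by
  have h := norm_inner_le_norm (𝕜 := ℂ) ((WithLp.equiv 2 (Fin n → ℂ)).symm x)
    ((WithLp.equiv 2 (Fin n → ℂ)).symm y)
  have hi : (inner ℂ ((WithLp.equiv 2 (Fin n → ℂ)).symm x)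
      ((WithLp.equiv 2 (Fin n → ℂ)).symm y) : ℂ) = star x ⬝ᵥ y := by
    simp [PiLp.inner_apply, RCLike.inner_apply, dotProduct, mul_comm]
  have hn : ∀ z : Fin n → ℂ, ‖(WithLp.equiv 2 (Fin n → ℂ)).symm z‖ = Real.sqrt (sqnorm z) := by
    intro z
    rw [EuclideanSpace.norm_eq]
    congr 1
    unfold sqnorm
    refine Finset.sum_congr rfl fun i _ => ?_
    simp [Complex.sq_norm]
  rw [hi, hn, hn] at h
  exact h


noncomputable def projKer (M : Matrix (Fin n) (Fin n) ℂ) (F : Finset (Fin n)) :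
    Submodule ℂ (Fin n → ℂ) :=
  LinearMap.ker ((LinearMap.funLeft ℂ ℂ (Subtype.val : {i // i ∈ F} → Fin n)).comp
    (Matrix.mulVecLin M))

lemma mem_projKer {M : Matrix (Fin n) (Fin n) ℂ} {F : Finset (Fin n)} {x : Fin n → ℂ} :
    x ∈ projKer M F ↔ ∀ i ∈ F, (M *ᵥ x) i = 0 := by
  simp only [projKer, LinearMap.mem_ker, LinearMap.comp_apply, Matrix.mulVecLin_apply,
    LinearMap.funLeft_apply, funext_iff]
  constructor
  · intro h i hi; exact h ⟨i, hi⟩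
  · intro h i; exact h i.1 i.2

lemma projKer_finrank (M : Matrix (Fin n) (Fin n) ℂ) (F : Finset (Fin n)) :
    n - F.card ≤ Module.finrank ℂ (projKer M F) := by
  have h1 := LinearMap.finrank_range_add_finrank_ker
    ((LinearMap.funLeft ℂ ℂ (Subtype.val : {i // i ∈ F} → Fin n)).comp (Matrix.mulVecLin M))
  have h2 : Module.finrank ℂ (LinearMap.range ((LinearMap.funLeft ℂ ℂ
      (Subtype.val : {i // i ∈ F} → Fin n)).comp (Matrix.mulVecLin M))) ≤ F.card := by
    refine (Submodule.finrank_le _).trans ?_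
    simp [Module.finrank_pi]
  have h3 : Module.finrank ℂ (Fin n → ℂ) = n := by simp
  rw [h3] at h1
  unfold projKer
  omega

lemma exists_ne_zero_inf (V₁ V₂ : Submodule ℂ (Fin n → ℂ))
    (h : n + 1 ≤ Module.finrank ℂ V₁ + Module.finrank ℂ V₂) :
    ∃ x : Fin n → ℂ, x ≠ 0 ∧ x ∈ V₁ ∧ x ∈ V₂ := by
  have hsum := Submodule.finrank_sup_add_finrank_inf_eq V₁ V₂
  have hsup : Module.finrank ℂ ↥(V₁ ⊔ V₂) ≤ n := by
    refine (Submodule.finrank_le _).trans_eq ?_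
    simp
  have hpos : 0 < Module.finrank ℂ ↥(V₁ ⊓ V₂) := by omega
  have : Nontrivial ↥(V₁ ⊓ V₂) := Module.finrank_pos_iff.mp hpos
  obtain ⟨⟨x, hx⟩, hx0⟩ := exists_ne (0 : ↥(V₁ ⊓ V₂))
  refine ⟨x, ?_, (Submodule.mem_inf.mp hx).1, (Submodule.mem_inf.mp hx).2⟩
  intro h0
  exact hx0 (Subtype.ext h0)


lemma core {H A : Matrix (Fin n) (Fin n) ℂ} (hH : H.IsHermitian) (hA : A.IsHermitian)
    (hquad : ∀ x : Fin n → ℂ,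
      (star x ⬝ᵥ H *ᵥ x).re ≤ Real.sqrt (sqnorm (A *ᵥ x)) * Real.sqrt (sqnorm x))
    (j : Fin n) :
    hH.eigenvalues (Tuple.sort hH.eigenvalues j) ≤
      |hA.eigenvalues (Tuple.sort (fun i => |hA.eigenvalues i|) j)| := by
  classical
  set h := hH.eigenvalues with hh
  set a := hA.eigenvalues with ha
  set τ := Tuple.sort h with hτ
  set τ' := Tuple.sort (fun i => |a i|) with hτ'
  set c := h (τ j) with hc
  set t := |a (τ' j)| with ht
  have ht0 : 0 ≤ t := abs_nonneg _
  set S : Finset (Fin n) := Finset.univ.filter (fun i => c ≤ h i) with hSdef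
  set T : Finset (Fin n) := Finset.univ.filter (fun i => |a i| ≤ t) with hTdef
  have hScard : n - (j : ℕ) ≤ S.card := by
    have hsub : (Finset.Ici j).image τ ⊆ S := by
      intro i hi
      obtain ⟨k, hk, rfl⟩ := Finset.mem_image.mp hi
      simp only [hSdef, Finset.mem_filter, Finset.mem_univ, true_and]
      have := Tuple.monotone_sort h (Finset.mem_Ici.mp hk)
      simpa [hτ, hc] using this
    calc n - (j : ℕ) = (Finset.Ici j).card := (Fin.card_Ici j).symm
      _ = ((Finset.Ici j).image τ).card :=
          (Finset.card_image_of_injective _ τ.injective).symm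
      _ ≤ S.card := Finset.card_le_card hsub
  have hTcard : (j : ℕ) + 1 ≤ T.card := by
    have hsub : (Finset.Iic j).image τ' ⊆ T := by
      intro i hi
      obtain ⟨k, hk, rfl⟩ := Finset.mem_image.mp hi
      simp only [hTdef, Finset.mem_filter, Finset.mem_univ, true_and]
      have := Tuple.monotone_sort (fun i => |a i|) (Finset.mem_Iic.mp hk)
      simpa [hτ', ht] using this
    calc (j : ℕ) + 1 = (Finset.Iic j).card := (Fin.card_Iic j).symm
      _ = ((Finset.Iic j).image τ').card :=
          (Finset.card_image_of_injective _ τ'.injective).symm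
      _ ≤ T.card := Finset.card_le_card hsub
  set QH := (hH.eigenvectorUnitary : Matrix (Fin n) (Fin n) ℂ) with hQH
  set QA := (hA.eigenvectorUnitary : Matrix (Fin n) (Fin n) ℂ) with hQA
  have hQH2 : QH * QHᴴ = 1 := Matrix.mem_unitaryGroup_iff.mp hH.eigenvectorUnitary.2
  have hQH1 : QHᴴ * QH = 1 := Matrix.mem_unitaryGroup_iff'.mp hH.eigenvectorUnitary.2
  have hQA2 : QA * QAᴴ = 1 := Matrix.mem_unitaryGroup_iff.mp hA.eigenvectorUnitary.2
  have hQA1 : QAᴴ * QA = 1 := Matrix.mem_unitaryGroup_iff'.mp hA.eigenvectorUnitary.2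
  obtain ⟨x, hx0, hx1, hx2⟩ := exists_ne_zero_inf (projKer QHᴴ Sᶜ) (projKer QAᴴ Tᶜ) (by
    have h1 := projKer_finrank QHᴴ Sᶜ
    have h2 := projKer_finrank QAᴴ Tᶜ
    have hSc : Sᶜ.card = n - S.card := by
      rw [Finset.card_compl, Fintype.card_fin]
    have hTc : Tᶜ.card = n - T.card := by
      rw [Finset.card_compl, Fintype.card_fin]
    have hSn : S.card ≤ n := by
      simpa using Finset.card_le_univ S
    have hTn : T.card ≤ n := by
      simpa using Finset.card_le_univ T
    have hj : (j : ℕ) < n := j.isLt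
    rw [hSc] at h1
    rw [hTc] at h2
    omega)
  set y := QHᴴ *ᵥ x with hy
  set z := QAᴴ *ᵥ x with hz
  have hy0 : ∀ i ∉ S, y i = 0 := fun i hi =>
    mem_projKer.mp hx1 i (Finset.mem_compl.mpr hi)
  have hz0 : ∀ i ∉ T, z i = 0 := fun i hi =>
    mem_projKer.mp hx2 i (Finset.mem_compl.mpr hi)
  have hyx : sqnorm y = sqnorm x := by
    rw [hy]
    exact sqnorm_mulVec_isometry (by rwa [Matrix.conjTranspose_conjTranspose]) x
  have hzx : sqnorm z = sqnorm x := by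
    rw [hz]
    exact sqnorm_mulVec_isometry (by rwa [Matrix.conjTranspose_conjTranspose]) x
  have quadH : (star x ⬝ᵥ H *ᵥ x).re = ∑ i, h i * Complex.normSq (y i) := by
    have hspec : H = QH * Matrix.diagonal (fun i => (h i : ℂ)) * QHᴴ := hH.spectral_theorem
    rw [hspec, dot_conj, ← hy, quad_diag h y]
    exact Complex.ofReal_re _
  have bound1 : c * sqnorm x ≤ (star x ⬝ᵥ H *ᵥ x).re := by
    rw [quadH, ← hyx]
    unfold sqnorm
    rw [Finset.mul_sum]
    refine Finset.sum_le_sum fun i _ => ?_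
    by_cases hiS : i ∈ S
    · have : c ≤ h i := by
        have := (Finset.mem_filter.mp hiS).2
        exact this
      exact mul_le_mul_of_nonneg_right this (Complex.normSq_nonneg _)
    · rw [hy0 i hiS]
      simp
  have boundA : sqnorm (A *ᵥ x) ≤ t ^ 2 * sqnorm x := by
    have hdots : star (A *ᵥ x) ⬝ᵥ (A *ᵥ x) = star x ⬝ᵥ ((Aᴴ * A) *ᵥ x) := by
      rw [Matrix.star_mulVec, ← Matrix.dotProduct_mulVec, Matrix.mulVec_mulVec]
    have hAspec : A = QA * Matrix.diagonal (fun i => (a i : ℂ)) * QAᴴ := hA.spectral_theorem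
    have hsq : Aᴴ * A = QA * Matrix.diagonal (fun i => ((a i ^ 2 : ℝ) : ℂ)) * QAᴴ := by
      rw [hA.eq]
      conv_lhs => rw [hAspec]
      have : (QA * Matrix.diagonal (fun i => (a i : ℂ)) * QAᴴ) *
          (QA * Matrix.diagonal (fun i => (a i : ℂ)) * QAᴴ)
          = QA * (Matrix.diagonal (fun i => (a i : ℂ)) * (QAᴴ * QA) *
            Matrix.diagonal (fun i => (a i : ℂ))) * QAᴴ := by
        noncomm_ring
      rw [this, hQA1, mul_one, Matrix.diagonal_mul_diagonal]
      congr 1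
      congr 1
      funext i
      push_cast
      ring
    have hval : sqnorm (A *ᵥ x) = ∑ i, a i ^ 2 * Complex.normSq (z i) := by
      have h1 : ((sqnorm (A *ᵥ x) : ℝ) : ℂ) = star (A *ᵥ x) ⬝ᵥ (A *ᵥ x) :=
        (star_dot_self _).symm
      rw [hdots, hsq, dot_conj, ← hz, quad_diag (fun i => a i ^ 2) z] at h1
      exact_mod_cast h1
    rw [hval, ← hzx]
    unfold sqnorm
    rw [Finset.mul_sum]
    refine Finset.sum_le_sum fun i _ => ?_
    by_cases hiT : i ∈ T
    · have hle : |a i| ≤ t := (Finset.mem_filter.mp hiT).2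
      have : a i ^ 2 ≤ t ^ 2 := by
        rw [← sq_abs]
        exact pow_le_pow_left₀ (abs_nonneg _) hle 2
      exact mul_le_mul_of_nonneg_right this (Complex.normSq_nonneg _)
    · rw [hz0 i hiT]
      simp
  have hNpos : 0 < sqnorm x := by
    obtain ⟨i, hi⟩ : ∃ i, x i ≠ 0 := by
      by_contra h'
      push_neg at h'
      exact hx0 (funext h')
    exact Finset.sum_pos' (fun i _ => Complex.normSq_nonneg _)
      ⟨i, Finset.mem_univ i, Complex.normSq_pos.mpr hi⟩
  have step2 : Real.sqrt (sqnorm (A *ᵥ x)) ≤ t * Real.sqrt (sqnorm x) := by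
    have := Real.sqrt_le_sqrt boundA
    rwa [Real.sqrt_mul (sq_nonneg t), Real.sqrt_sq ht0] at this
  have step3 : c * sqnorm x ≤ t * sqnorm x := by
    calc c * sqnorm x ≤ Real.sqrt (sqnorm (A *ᵥ x)) * Real.sqrt (sqnorm x) :=
          bound1.trans (hquad x)
      _ ≤ (t * Real.sqrt (sqnorm x)) * Real.sqrt (sqnorm x) :=
          mul_le_mul_of_nonneg_right step2 (Real.sqrt_nonneg _)
      _ = t * sqnorm x := by
          rw [mul_assoc, Real.mul_self_sqrt (sqnorm_nonneg x)]
  exact (mul_le_mul_iff_of_pos_right hNpos).mp step3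

lemma conj_diag_perm (M : Matrix (Fin n) (Fin n) ℂ) (e : Fin n → ℂ) (σ : Equiv.Perm (Fin n)) :
    (M.submatrix id σ) * Matrix.diagonal (fun i => e (σ i)) * (M.submatrix id σ)ᴴ
      = M * Matrix.diagonal e * Mᴴ := by
  have key : ∀ (N : Matrix (Fin n) (Fin n) ℂ) (f : Fin n → ℂ) (i k : Fin n),
      (N * Matrix.diagonal f * Nᴴ) i k = ∑ j, N i j * f j * star (N k j) := by
    intro N f i k
    rw [Matrix.mul_apply]
    refine Finset.sum_congr rfl fun j _ => ?_
    rw [Matrix.mul_diagonal, Matrix.conjTranspose_apply]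
  ext i k
  rw [key, key]
  have := Equiv.sum_comp σ (fun j => M i j * e j * star (M k j))
  simpa [Matrix.submatrix_apply] using this.symm ▸ rfl

lemma exists_unitary_conj {H : Matrix (Fin n) (Fin n) ℂ} (hH : H.IsHermitian)
    (Q : Matrix (Fin n) (Fin n) ℂ) (hQ : Q ∈ Matrix.unitaryGroup (Fin n) ℂ) (d : Fin n → ℝ)
    (σ : Equiv.Perm (Fin n)) (hle : ∀ i, hH.eigenvalues i ≤ d (σ i)) :
    ∃ U ∈ Matrix.unitaryGroup (Fin n) ℂ,
      (U * (Q * Matrix.diagonal (fun i => (d i : ℂ)) * Qᴴ) * Uᴴ - H).PosSemidef := by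
  classical
  set QH := (hH.eigenvectorUnitary : Matrix (Fin n) (Fin n) ℂ) with hQHdef
  have hQH2 : QH * QHᴴ = 1 := Matrix.mem_unitaryGroup_iff.mp hH.eigenvectorUnitary.2
  have hQH1 : QHᴴ * QH = 1 := Matrix.mem_unitaryGroup_iff'.mp hH.eigenvectorUnitary.2
  set R := Q.submatrix id σ with hRdef
  have hRR : Rᴴ * R = 1 := by
    have h1 : Rᴴ * R = (Qᴴ * Q).submatrix σ σ := by
      ext i k
      simp [hRdef, Matrix.mul_apply, Matrix.submatrix_apply, Matrix.conjTranspose_apply]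
    have h2 : Qᴴ * Q = 1 := Matrix.mem_unitaryGroup_iff'.mp hQ
    rw [h1, h2, Matrix.submatrix_one _ σ.injective]
  have hRmem : R ∈ Matrix.unitaryGroup (Fin n) ℂ := Matrix.mem_unitaryGroup_iff'.mpr hRR
  refine ⟨QH * Rᴴ, ?_, ?_⟩
  · exact Submonoid.mul_mem _ hH.eigenvectorUnitary.2 (Unitary.star_mem hRmem)
  · have hK : Q * Matrix.diagonal (fun i => (d i : ℂ)) * Qᴴ
        = R * Matrix.diagonal (fun i => ((d (σ i) : ℝ) : ℂ)) * Rᴴ :=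
      (conj_diag_perm Q (fun i => (d i : ℂ)) σ).symm
    have hUKU : QH * Rᴴ * (Q * Matrix.diagonal (fun i => (d i : ℂ)) * Qᴴ) * (QH * Rᴴ)ᴴ
        = QH * Matrix.diagonal (fun i => ((d (σ i) : ℝ) : ℂ)) * QHᴴ := by
      rw [hK, Matrix.conjTranspose_mul, Matrix.conjTranspose_conjTranspose]
      have e1 : QH * Rᴴ * (R * Matrix.diagonal (fun i => ((d (σ i) : ℝ) : ℂ)) * Rᴴ) * (R * QHᴴ)
          = QH * ((Rᴴ * R) * Matrix.diagonal (fun i => ((d (σ i) : ℝ) : ℂ)) * (Rᴴ * R)) * QHᴴ := by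
        noncomm_ring
      rw [e1, hRR, one_mul, mul_one]
    rw [hUKU]
    have hspec : H = QH * Matrix.diagonal (fun i => ((hH.eigenvalues i : ℝ) : ℂ)) * QHᴴ :=
      hH.spectral_theorem
    have hdiff : QH * Matrix.diagonal (fun i => ((d (σ i) : ℝ) : ℂ)) * QHᴴ - H
        = QH * Matrix.diagonal (fun i => ((d (σ i) - hH.eigenvalues i : ℝ) : ℂ)) * QHᴴ := by
      conv_lhs => rw [hspec]
      have : Matrix.diagonal (fun i => ((d (σ i) - hH.eigenvalues i : ℝ) : ℂ))
          = Matrix.diagonal (fun i => ((d (σ i) : ℝ) : ℂ))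
            - Matrix.diagonal (fun i => ((hH.eigenvalues i : ℝ) : ℂ)) := by
        rw [Matrix.diagonal_sub]
        congr 1
        funext i
        push_cast
        ring
      rw [this]
      noncomm_ring
    rw [hdiff]
    refine Matrix.PosSemidef.mul_mul_conjTranspose_same ?_ QH
    refine Matrix.posSemidef_diagonal_iff.mpr fun i => ?_
    rw [Complex.zero_le_real]
    linarith [hle i]

lemma perm_of_sorted (g f : Fin n → ℝ)
    (hle : ∀ j : Fin n, g (Tuple.sort g j) ≤ f (Tuple.sort f j)) :
    ∃ σ : Equiv.Perm (Fin n), ∀ i, g i ≤ f (σ i) := by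
  refine ⟨(Tuple.sort g).symm.trans (Tuple.sort f), fun i => ?_⟩
  have := hle ((Tuple.sort g).symm i)
  simpa using this

lemma cfc_expand {A : Matrix (Fin n) (Fin n) ℂ} (hA : A.IsHermitian) (f : ℝ → ℝ) :
    hA.cfc f = (hA.eigenvectorUnitary : Matrix (Fin n) (Fin n) ℂ) *
      Matrix.diagonal (fun i => ((f (hA.eigenvalues i) : ℝ) : ℂ)) *
      (hA.eigenvectorUnitary : Matrix (Fin n) (Fin n) ℂ)ᴴ := rfl

lemma cfc_mul_cfc {A : Matrix (Fin n) (Fin n) ℂ} (hA : A.IsHermitian) (f g : ℝ → ℝ) :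
    hA.cfc f * hA.cfc g = hA.cfc (fun t => f t * g t) := by
  set QA := (hA.eigenvectorUnitary : Matrix (Fin n) (Fin n) ℂ) with hQAdef
  have hQA1 : QAᴴ * QA = 1 := Matrix.mem_unitaryGroup_iff'.mp hA.eigenvectorUnitary.2
  rw [cfc_expand hA f, cfc_expand hA g, cfc_expand hA (fun t => f t * g t)]
  have e1 : QA * Matrix.diagonal (fun i => ((f (hA.eigenvalues i) : ℝ) : ℂ)) * QAᴴ *
      (QA * Matrix.diagonal (fun i => ((g (hA.eigenvalues i) : ℝ) : ℂ)) * QAᴴ)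
      = QA * (Matrix.diagonal (fun i => ((f (hA.eigenvalues i) : ℝ) : ℂ)) * (QAᴴ * QA) *
        Matrix.diagonal (fun i => ((g (hA.eigenvalues i) : ℝ) : ℂ))) * QAᴴ := by
    noncomm_ring
  rw [e1, hQA1, mul_one, Matrix.diagonal_mul_diagonal]
  congr 2
  funext i
  push_cast
  ring

lemma cfc_id' {A : Matrix (Fin n) (Fin n) ℂ} (hA : A.IsHermitian) :
    hA.cfc (fun t => t) = A := (hA.spectral_theorem).symm

lemma cfc_one' {A : Matrix (Fin n) (Fin n) ℂ} (hA : A.IsHermitian) :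
    hA.cfc (fun _ => 1) = 1 := by
  rw [cfc_expand]
  have h1 : Matrix.diagonal (fun _ : Fin n => (((1 : ℝ) : ℝ) : ℂ)) = 1 := by
    simp
  rw [h1, mul_one]
  exact Matrix.mem_unitaryGroup_iff.mp hA.eigenvectorUnitary.2

lemma dot_conjTranspose (M : Matrix (Fin n) (Fin n) ℂ) (x : Fin n → ℂ) :
    star x ⬝ᵥ Mᴴ *ᵥ x = star (star x ⬝ᵥ M *ᵥ x) := by
  rw [Matrix.dotProduct_mulVec, ← Matrix.star_mulVec, Matrix.star_dotProduct]

lemma half_le {Sm A : Matrix (Fin n) (Fin n) ℂ} (hA : A.IsHermitian) (hSH : Sm.IsHermitian)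
    (hS1 : Smᴴ * Sm = 1) :
    ∃ U ∈ Matrix.unitaryGroup (Fin n) ℂ,
      (U * hA.cfc (fun t => |t|) * Uᴴ - (2:ℝ)⁻¹ • (Sm * A + A * Sm)).PosSemidef := by
  have hHerm : (Sm * A + A * Sm).IsHermitian := by
    show _ = _
    rw [Matrix.conjTranspose_add, Matrix.conjTranspose_mul, Matrix.conjTranspose_mul,
      hA.eq, hSH.eq, add_comm]
  have hH : ((2:ℝ)⁻¹ • (Sm * A + A * Sm)).IsHermitian := isHermitianHalfSmulTmp hHerm
  have hquad : ∀ x : Fin n → ℂ, (star x ⬝ᵥ ((2:ℝ)⁻¹ • (Sm * A + A * Sm)) *ᵥ x).re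
      ≤ Real.sqrt (sqnorm (A *ᵥ x)) * Real.sqrt (sqnorm x) := by
    intro x
    have hAS : A * Sm = (Sm * A)ᴴ := by
      rw [Matrix.conjTranspose_mul, hA.eq, hSH.eq]
    have hre : (star x ⬝ᵥ ((2:ℝ)⁻¹ • (Sm * A + A * Sm)) *ᵥ x).re
        = (star x ⬝ᵥ (Sm * A) *ᵥ x).re := by
      rw [Matrix.smul_mulVec, dotProduct_smul, Matrix.add_mulVec,
        dotProduct_add, hAS, dot_conjTranspose]
      rw [Complex.real_smul]
      simp [Complex.add_re, Complex.mul_re]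
      ring
    rw [hre]
    have h1 : (star x ⬝ᵥ (Sm * A) *ᵥ x).re ≤ ‖star x ⬝ᵥ (Sm * A) *ᵥ x‖ :=
      Complex.re_le_norm _
    refine h1.trans ?_
    rw [← Matrix.mulVec_mulVec]
    have h2 := cs x (Sm *ᵥ (A *ᵥ x))
    rw [sqnorm_mulVec_isometry hS1] at h2
    linarith [h2]
  have hsorted := fun j => core hH hA (fun x => hquad x) j
  obtain ⟨σ, hσ⟩ := perm_of_sorted hH.eigenvalues (fun i => |hA.eigenvalues i|) hsorted
  obtain ⟨U, hU, hpsd⟩ := exists_unitary_conj hH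
    (hA.eigenvectorUnitary : Matrix (Fin n) (Fin n) ℂ) hA.eigenvectorUnitary.2
    (fun i => |hA.eigenvalues i|) σ hσ
  exact ⟨U, hU, hpsd⟩

end AbsAddAux


/-- For Hermitian `A, B` there are unitaries `U, V` with
`|A + B| ≤ U |A| Uᴴ + V |B| Vᴴ` in the Loewner order. -/
theorem abs_add_le_unitary_conj
    {n : ℕ} (A B : Matrix (Fin n) (Fin n) ℂ) (hA : A.IsHermitian) (hB : B.IsHermitian) :
    ∃ U V : Matrix (Fin n) (Fin n) ℂ,
      U ∈ Matrix.unitaryGroup (Fin n) ℂ ∧ V ∈ Matrix.unitaryGroup (Fin n) ℂ ∧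
      (U * hA.cfc (fun t => |t|) * Uᴴ + V * hB.cfc (fun t => |t|) * Vᴴ -
        (hA.add hB).cfc fun t => |t|).PosSemidef := by
  classical
  set sgn : ℝ → ℝ := fun t => if t < 0 then -1 else 1 with hsgn
  set S := (hA.add hB).cfc sgn with hSdef
  have hSH : S.IsHermitian := isHermitian_cfc _ sgn
  have hS1 : Sᴴ * S = 1 := by
    rw [hSH.eq, hSdef, AbsAddAux.cfc_mul_cfc]
    have h1 : (fun t => sgn t * sgn t) = fun _ => (1 : ℝ) := by
      funext t
      simp only [hsgn]
      split <;> norm_num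
    rw [h1, AbsAddAux.cfc_one']
  have habs : (fun t => sgn t * t) = fun t : ℝ => |t| := by
    funext t
    simp only [hsgn]
    split
    · rename_i h; rw [abs_of_neg h]; ring
    · rename_i h; rw [abs_of_nonneg (not_lt.mp h)]; ring
  have habs' : (fun t => t * sgn t) = fun t : ℝ => |t| := by
    funext t
    simp only [hsgn]
    split
    · rename_i h; rw [abs_of_neg h]; ring
    · rename_i h; rw [abs_of_nonneg (not_lt.mp h)]; ring
  have hid : (hA.add hB).cfc (fun t => t) = A + B := AbsAddAux.cfc_id' _
  have hSC : S * (A + B) = (hA.add hB).cfc (fun t => |t|) := by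
    rw [← habs, ← AbsAddAux.cfc_mul_cfc (hA.add hB) sgn (fun t => t), hid, ← hSdef]
  have hCS : (A + B) * S = (hA.add hB).cfc (fun t => |t|) := by
    rw [← habs', ← AbsAddAux.cfc_mul_cfc (hA.add hB) (fun t => t) sgn, hid, ← hSdef]
  have hsplit : (hA.add hB).cfc (fun t => |t|)
      = (2 : ℝ)⁻¹ • (S * A + A * S) + (2 : ℝ)⁻¹ • (S * B + B * S) := by
    have h2 : S * (A + B) + (A + B) * S = (S * A + A * S) + (S * B + B * S) := by
      noncomm_ring
    have h3 : (hA.add hB).cfc (fun t => |t|)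
        = (2 : ℝ)⁻¹ • (S * (A + B) + (A + B) * S) := by
      rw [hSC, hCS, ← two_smul ℝ ((hA.add hB).cfc (fun t => |t|)), smul_smul,
        show ((2 : ℝ)⁻¹ * 2) = 1 by norm_num, one_smul]
    rw [h3, h2, smul_add]
  obtain ⟨U, hU, hUp⟩ := AbsAddAux.half_le hA hSH hS1
  obtain ⟨V, hV, hVp⟩ := AbsAddAux.half_le hB hSH hS1
  refine ⟨U, V, hU, hV, ?_⟩
  have hre : U * hA.cfc (fun t => |t|) * Uᴴ + V * hB.cfc (fun t => |t|) * Vᴴ -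
      (hA.add hB).cfc (fun t => |t|)
      = (U * hA.cfc (fun t => |t|) * Uᴴ - (2 : ℝ)⁻¹ • (S * A + A * S))
        + (V * hB.cfc (fun t => |t|) * Vᴴ - (2 : ℝ)⁻¹ • (S * B + B * S)) := by
    rw [hsplit]
    abel
  rw [hre]
  exact hUp.add hVp
end

section
/- Let f : ℝ → ℝ be a convex function which is monotone (either nondecreasing on all of ℝ or nonincreasing on all of ℝ) and let A, B be n×n Hermitian complex matrices. Then there exists an n×n unitary matrix U such that f((A+B)/2) ≤ U ((f(A)+f(B))/2) Uᴴ in the Loewner order. -/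
open Matrix
open scoped ComplexOrder

section Aux
variable {n : ℕ}

variable {n : ℕ}

lemma quad_form_eq (V : Matrix (Fin n) (Fin n) ℂ) (ν : Fin n → ℝ) (x : Fin n → ℂ) :
    star x ⬝ᵥ ((V * diagonal (Complex.ofReal ∘ ν) * star V) *ᵥ x)
      = ((∑ i, ν i * Complex.normSq ((star V *ᵥ x) i) : ℝ) : ℂ) := by
  set y := star V *ᵥ x with hy
  have h1 : star x ᵥ* V = star y := by
    rw [hy, star_mulVec, star_eq_conjTranspose, conjTranspose_conjTranspose]
  rw [← mulVec_mulVec, ← mulVec_mulVec, dotProduct_mulVec, h1, ← hy]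
  simp only [mulVec_diagonal, dotProduct, Pi.star_apply, Function.comp_apply]
  push_cast
  congr 1
  ext i
  rw [Complex.star_def, mul_left_comm, mul_comm ((starRingEnd ℂ) (y i)) (y i), Complex.mul_conj]

lemma sum_normSq_star_mulVec {V : Matrix (Fin n) (Fin n) ℂ}
    (hV : V ∈ Matrix.unitaryGroup (Fin n) ℂ) (x : Fin n → ℂ) :
    ∑ i, Complex.normSq ((star V *ᵥ x) i) = ∑ i, Complex.normSq (x i) := by
  have key : ∀ z : Fin n → ℂ, star z ⬝ᵥ z = ((∑ i, Complex.normSq (z i) : ℝ) : ℂ) := by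
    intro z
    simp only [dotProduct, Pi.star_apply]
    push_cast
    congr 1
    ext i
    rw [Complex.star_def, mul_comm, Complex.mul_conj]
  have h1 : star (star V *ᵥ x) ⬝ᵥ (star V *ᵥ x) = star x ⬝ᵥ x := by
    rw [star_mulVec, star_eq_conjTranspose, conjTranspose_conjTranspose,
      dotProduct_mulVec, vecMul_vecMul, ← star_eq_conjTranspose,
      (Matrix.mem_unitaryGroup_iff).mp hV, vecMul_one]
  have := key (star V *ᵥ x)
  rw [h1, key x] at this
  exact_mod_cast this.symm

end Aux


lemma exists_good_vector {n : ℕ} (k : Fin n)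
    {V W : Matrix (Fin n) (Fin n) ℂ}
    (hV : V ∈ Matrix.unitaryGroup (Fin n) ℂ) (hW : W ∈ Matrix.unitaryGroup (Fin n) ℂ)
    (σ τ : Equiv.Perm (Fin n)) :
    ∃ x : Fin n → ℂ, (∑ i, Complex.normSq (x i)) = 1 ∧
      (∀ i : Fin n, (star V *ᵥ x) i ≠ 0 → ∃ l : Fin n, k ≤ l ∧ σ l = i) ∧
      (∀ l : Fin n, k < l → (star W *ᵥ x) (τ l) = 0) := by
  classical
  set s : Finset (Fin n) := Finset.Ici k with hs
  set t : Finset (Fin n) := Finset.Ioi k with ht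
  set T : Matrix (Fin n) s ℂ := Matrix.of (fun i l => if σ (l : Fin n) = i then 1 else 0) with hT
  set Φ : Matrix t s ℂ := Matrix.of (fun j l => (star W * V * T) (τ (j : Fin n)) l) with hΦ
  -- the linear map Φ is not injective for dimension reasons
  have hninj : ¬ Function.Injective Φ.mulVecLin := by
    intro h
    have hle := LinearMap.finrank_le_finrank_of_injective h
    rw [Module.finrank_fintype_fun_eq_card, Module.finrank_fintype_fun_eq_card,
      Fintype.card_coe, Fintype.card_coe, hs, ht, Fin.card_Ici, Fin.card_Ioi] at hle
    omega
  obtain ⟨a, b, hab, hne⟩ := Function.not_injective_iff.mp hninj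
  set c : s → ℂ := a - b with hc
  have hc0 : c ≠ 0 := sub_ne_zero.mpr hne
  have hΦc : Φ *ᵥ c = 0 := by
    have : Φ.mulVecLin c = 0 := by rw [hc, map_sub, hab, sub_self]
    simpa [Matrix.mulVecLin_apply] using this
  set x₀ : Fin n → ℂ := (V * T) *ᵥ c with hx₀
  have hyc : star V *ᵥ x₀ = T *ᵥ c := by
    rw [hx₀, mulVec_mulVec, ← Matrix.mul_assoc, Matrix.mem_unitaryGroup_iff'.mp hV, Matrix.one_mul]
  have hsupp : ∀ i, (T *ᵥ c) i ≠ 0 → ∃ l : Fin n, k ≤ l ∧ σ l = i := by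
    intro i hi
    by_contra h
    push_neg at h
    apply hi
    apply Finset.sum_eq_zero
    intro l _
    have : σ (l : Fin n) ≠ i := h _ (Finset.mem_Ici.mp l.2)
    simp [hT, this]
  -- x₀ is nonzero
  have hTc : T *ᵥ c ≠ 0 := by
    obtain ⟨l₀, hl₀⟩ := Function.ne_iff.mp hc0
    intro h0
    apply hl₀
    have : (T *ᵥ c) (σ (l₀ : Fin n)) = c l₀ := by
      rw [Matrix.mulVec]
      rw [show (fun j => T (σ (l₀ : Fin n)) j) ⬝ᵥ c
          = ∑ l : s, (if l = l₀ then c l else 0) from ?_]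
      · simp
      · apply Finset.sum_congr rfl
        intro l _
        by_cases hl : l = l₀
        · simp [hl, hT]
        · have : σ (l : Fin n) ≠ σ (l₀ : Fin n) := by
            intro hσ
            exact hl (Subtype.ext (σ.injective hσ))
          simp [hT, this, hl]
    rw [h0] at this
    simpa using this.symm
  have hx₀0 : x₀ ≠ 0 := by
    intro h
    apply hTc
    rw [← hyc, h, Matrix.mulVec_zero]
  set s₀ : ℝ := ∑ i, Complex.normSq (x₀ i) with hs₀
  have hs₀pos : 0 < s₀ := by
    apply Finset.sum_pos' (fun i _ => Complex.normSq_nonneg _)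
    obtain ⟨i, hi⟩ := Function.ne_iff.mp hx₀0
    exact ⟨i, Finset.mem_univ i, Complex.normSq_pos.mpr hi⟩
  set r : ℝ := (Real.sqrt s₀)⁻¹ with hr
  refine ⟨(r : ℂ) • x₀, ?_, ?_, ?_⟩
  · have : ∀ i, Complex.normSq (((r : ℂ) • x₀) i) = r * r * Complex.normSq (x₀ i) := by
      intro i
      simp [Complex.normSq_mul, Complex.normSq_ofReal]
    rw [Finset.sum_congr rfl (fun i _ => this i), ← Finset.mul_sum, ← hs₀, hr,
      ← Real.sqrt_inv, Real.mul_self_sqrt (by positivity)]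
    exact inv_mul_cancel₀ hs₀pos.ne'
  · intro i hi
    apply hsupp
    rw [Matrix.mulVec_smul] at hi
    · intro h
      apply hi
      rw [hyc] at *
      simp [h]
  · intro l hl
    rw [Matrix.mulVec_smul]
    have : (star W *ᵥ x₀) (τ l) = 0 := by
      have hmem : l ∈ t := Finset.mem_Ioi.mpr hl
      have := congrFun hΦc ⟨l, hmem⟩
      rw [hx₀, mulVec_mulVec, ← Matrix.mul_assoc]
      exact this
    simp [this]


section Helpers
variable {n : ℕ}

lemma sum_mul_le_of_support' {w v : Fin n → ℝ} {c : ℝ} (hw : ∀ i, 0 ≤ w i)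
    (hsum : ∑ i, w i = 1) (hv : ∀ i, w i ≠ 0 → v i ≤ c) : ∑ i, v i * w i ≤ c := by
  calc ∑ i, v i * w i ≤ ∑ i, c * w i := Finset.sum_le_sum (fun i _ => by
        by_cases h : w i = 0
        · simp [h]
        · exact mul_le_mul_of_nonneg_right (hv i h) (hw i))
    _ = c := by rw [← Finset.mul_sum, hsum, mul_one]

lemma le_sum_mul_of_support' {w v : Fin n → ℝ} {c : ℝ} (hw : ∀ i, 0 ≤ w i)
    (hsum : ∑ i, w i = 1) (hv : ∀ i, w i ≠ 0 → c ≤ v i) : c ≤ ∑ i, v i * w i := by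
  calc c = ∑ i, c * w i := by rw [← Finset.mul_sum, hsum, mul_one]
    _ ≤ ∑ i, v i * w i := Finset.sum_le_sum (fun i _ => by
        by_cases h : w i = 0
        · simp [h]
        · exact mul_le_mul_of_nonneg_right (hv i h) (hw i))

lemma quad_eigen_eq {X : Matrix (Fin n) (Fin n) ℂ} (hX : X.IsHermitian) (x : Fin n → ℂ) :
    star x ⬝ᵥ (X *ᵥ x)
      = ((∑ i, hX.eigenvalues i *
          Complex.normSq ((star (hX.eigenvectorUnitary : Matrix (Fin n) (Fin n) ℂ) *ᵥ x) i) : ℝ)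
          : ℂ) := by
  conv_lhs => rw [hX.spectral_theorem]
  exact quad_form_eq _ _ _

lemma quad_cfc_eq {X : Matrix (Fin n) (Fin n) ℂ} (hX : X.IsHermitian) (g : ℝ → ℝ)
    (x : Fin n → ℂ) :
    star x ⬝ᵥ (hX.cfc g *ᵥ x)
      = ((∑ i, g (hX.eigenvalues i) *
          Complex.normSq ((star (hX.eigenvectorUnitary : Matrix (Fin n) (Fin n) ℂ) *ᵥ x) i) : ℝ)
          : ℂ) :=
  quad_form_eq _ _ _

end Helpers

lemma key_sorted_le {n : ℕ} (f : ℝ → ℝ) (hf : ConvexOn ℝ Set.univ f)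
    (hmono : Monotone f ∨ Antitone f)
    {A B : Matrix (Fin n) (Fin n) ℂ} (hA : A.IsHermitian) (hB : B.IsHermitian)
    {C M : Matrix (Fin n) (Fin n) ℂ} (hC : C.IsHermitian) (hM : M.IsHermitian)
    (hCdef : C = (2:ℝ)⁻¹ • (A + B))
    (hMdef : M = (2:ℝ)⁻¹ • (hA.cfc f + hB.cfc f))
    (k : Fin n) :
    f (hC.eigenvalues (Tuple.sort (f ∘ hC.eigenvalues) k))
      ≤ hM.eigenvalues (Tuple.sort hM.eigenvalues k) := by
  classical
  set d : Fin n → ℝ := f ∘ hC.eigenvalues with hd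
  set μ : Fin n → ℝ := hM.eigenvalues with hμ
  set σ : Equiv.Perm (Fin n) := Tuple.sort d with hσdef
  set τ : Equiv.Perm (Fin n) := Tuple.sort μ with hτdef
  set V : Matrix (Fin n) (Fin n) ℂ := (hC.eigenvectorUnitary : Matrix (Fin n) (Fin n) ℂ) with hVdef
  set Wm : Matrix (Fin n) (Fin n) ℂ := (hM.eigenvectorUnitary : Matrix (Fin n) (Fin n) ℂ) with hWdef
  obtain ⟨x, hx1, hx2, hx3⟩ :=
    exists_good_vector k hC.eigenvectorUnitary.2 hM.eigenvectorUnitary.2 σ τ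
  set VA : Matrix (Fin n) (Fin n) ℂ := (hA.eigenvectorUnitary : Matrix (Fin n) (Fin n) ℂ) with hVAdef
  set VB : Matrix (Fin n) (Fin n) ℂ := (hB.eigenvectorUnitary : Matrix (Fin n) (Fin n) ℂ) with hVBdef
  set wC : Fin n → ℝ := fun i => Complex.normSq ((star V *ᵥ x) i) with hwC
  set wA : Fin n → ℝ := fun i => Complex.normSq ((star VA *ᵥ x) i) with hwA
  set wB : Fin n → ℝ := fun i => Complex.normSq ((star VB *ᵥ x) i) with hwB
  set wM : Fin n → ℝ := fun i => Complex.normSq ((star Wm *ᵥ x) i) with hwM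
  have hwC1 : ∑ i, wC i = 1 := by
    rw [hwC, sum_normSq_star_mulVec hC.eigenvectorUnitary.2 x]; exact hx1
  have hwA1 : ∑ i, wA i = 1 := by
    rw [hwA, sum_normSq_star_mulVec hA.eigenvectorUnitary.2 x]; exact hx1
  have hwB1 : ∑ i, wB i = 1 := by
    rw [hwB, sum_normSq_star_mulVec hB.eigenvectorUnitary.2 x]; exact hx1
  have hwM1 : ∑ i, wM i = 1 := by
    rw [hwM, sum_normSq_star_mulVec hM.eigenvectorUnitary.2 x]; exact hx1
  set qA : ℝ := ∑ i, hA.eigenvalues i * wA i with hqAdef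
  set qB : ℝ := ∑ i, hB.eigenvalues i * wB i with hqBdef
  set qC : ℝ := ∑ i, hC.eigenvalues i * wC i with hqCdef
  set fqA : ℝ := ∑ i, f (hA.eigenvalues i) * wA i with hfqAdef
  set fqB : ℝ := ∑ i, f (hB.eigenvalues i) * wB i with hfqBdef
  set qM : ℝ := ∑ i, μ i * wM i with hqMdef
  -- the two linear relations
  have hqC : qC = 2⁻¹ * (qA + qB) := by
    have h1 : star x ⬝ᵥ (C *ᵥ x) = ((qC : ℝ) : ℂ) := quad_eigen_eq hC x
    have h2 : star x ⬝ᵥ (A *ᵥ x) = ((qA : ℝ) : ℂ) := quad_eigen_eq hA x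
    have h3 : star x ⬝ᵥ (B *ᵥ x) = ((qB : ℝ) : ℂ) := quad_eigen_eq hB x
    have hsplit : star x ⬝ᵥ (C *ᵥ x)
        = ((2:ℝ)⁻¹ : ℂ) * (star x ⬝ᵥ (A *ᵥ x) + star x ⬝ᵥ (B *ᵥ x)) := by
      rw [hCdef]
      simp [Matrix.smul_mulVec, Matrix.add_mulVec, dotProduct_add, dotProduct_smul,
        Complex.real_smul, mul_add]
    rw [h1, h2, h3] at hsplit
    exact_mod_cast hsplit
  have hqM : qM = 2⁻¹ * (fqA + fqB) := by
    have h1 : star x ⬝ᵥ (M *ᵥ x) = ((qM : ℝ) : ℂ) := quad_eigen_eq hM x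
    have h2 : star x ⬝ᵥ (hA.cfc f *ᵥ x) = ((fqA : ℝ) : ℂ) := quad_cfc_eq hA f x
    have h3 : star x ⬝ᵥ (hB.cfc f *ᵥ x) = ((fqB : ℝ) : ℂ) := quad_cfc_eq hB f x
    have hsplit : star x ⬝ᵥ (M *ᵥ x)
        = ((2:ℝ)⁻¹ : ℂ) * (star x ⬝ᵥ (hA.cfc f *ᵥ x) + star x ⬝ᵥ (hB.cfc f *ᵥ x)) := by
      rw [hMdef]
      simp [Matrix.smul_mulVec, Matrix.add_mulVec, dotProduct_add, dotProduct_smul,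
        Complex.real_smul, mul_add]
    rw [h1, h2, h3] at hsplit
    exact_mod_cast hsplit
  -- Jensen's inequality for A and B
  have hJ : ∀ (X : Matrix (Fin n) (Fin n) ℂ) (hX : X.IsHermitian) (w : Fin n → ℝ),
      (∑ i, w i = 1) → (∀ i, 0 ≤ w i) →
      f (∑ i, hX.eigenvalues i * w i) ≤ ∑ i, f (hX.eigenvalues i) * w i := by
    intro X hX w hw1 hw0
    have := hf.map_sum_le (t := Finset.univ) (w := w) (p := hX.eigenvalues)
      (fun i _ => hw0 i) hw1 (fun i _ => Set.mem_univ _)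
    calc f (∑ i, hX.eigenvalues i * w i) = f (∑ i, w i • hX.eigenvalues i) := by
          congr 1; exact Finset.sum_congr rfl (fun i _ => by rw [smul_eq_mul, mul_comm])
      _ ≤ ∑ i, w i • f (hX.eigenvalues i) := this
      _ = ∑ i, f (hX.eigenvalues i) * w i :=
          Finset.sum_congr rfl (fun i _ => by rw [smul_eq_mul, mul_comm])
  have hJA : f qA ≤ fqA := hJ A hA wA hwA1 (fun i => Complex.normSq_nonneg _)
  have hJB : f qB ≤ fqB := hJ B hB wB hwB1 (fun i => Complex.normSq_nonneg _)
  -- midpoint convexity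
  have hmid : f (2⁻¹ * (qA + qB)) ≤ 2⁻¹ * (f qA + f qB) := by
    have := hf.2 (Set.mem_univ qA) (Set.mem_univ qB)
      (by norm_num : (0:ℝ) ≤ 2⁻¹) (by norm_num : (0:ℝ) ≤ 2⁻¹) (by norm_num : (2:ℝ)⁻¹ + 2⁻¹ = 1)
    simp only [smul_eq_mul] at this
    calc f (2⁻¹ * (qA + qB)) = f (2⁻¹ * qA + 2⁻¹ * qB) := by ring_nf
      _ ≤ 2⁻¹ * f qA + 2⁻¹ * f qB := this
      _ = 2⁻¹ * (f qA + f qB) := by ring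
  -- lower bound : d (σ k) ≤ f qC
  have hlow : d (σ k) ≤ f qC := by
    set I : Finset (Fin n) := Finset.image (fun l => σ l) (Finset.Ici k) with hI
    have hIne : I.Nonempty := ⟨σ k, Finset.mem_image.mpr ⟨k, Finset.mem_Ici.mpr le_rfl, rfl⟩⟩
    have hwsupp : ∀ i, wC i ≠ 0 → i ∈ I := by
      intro i hi
      have hne : (star V *ᵥ x) i ≠ 0 := by
        intro h; apply hi; rw [hwC]; simp [h]
      obtain ⟨l, hl, hσ⟩ := hx2 i hne
      exact Finset.mem_image.mpr ⟨l, Finset.mem_Ici.mpr hl, hσ⟩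
    have hdI : ∀ i ∈ I, d (σ k) ≤ d i := by
      intro i hi
      obtain ⟨l, hl, rfl⟩ := Finset.mem_image.mp hi
      exact Tuple.monotone_sort d (Finset.mem_Ici.mp hl)
    rcases hmono with hfm | hfm
    · obtain ⟨i₀, hi₀, hmin⟩ := I.exists_min_image hC.eigenvalues hIne
      have h1 : hC.eigenvalues i₀ ≤ qC :=
        le_sum_mul_of_support' (fun i => Complex.normSq_nonneg _) hwC1
          (fun i hwi => hmin i (hwsupp i hwi))
      calc d (σ k) ≤ d i₀ := hdI i₀ hi₀
        _ ≤ f qC := hfm h1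
    · obtain ⟨i₀, hi₀, hmax⟩ := I.exists_max_image hC.eigenvalues hIne
      have h1 : qC ≤ hC.eigenvalues i₀ :=
        sum_mul_le_of_support' (fun i => Complex.normSq_nonneg _) hwC1
          (fun i hwi => hmax i (hwsupp i hwi))
      calc d (σ k) ≤ d i₀ := hdI i₀ hi₀
        _ ≤ f qC := hfm h1
  -- upper bound : qM ≤ μ (τ k)
  have hupp : qM ≤ μ (τ k) := by
    apply sum_mul_le_of_support' (fun i => Complex.normSq_nonneg _) hwM1
    intro i hwi
    have hz : (star Wm *ᵥ x) i ≠ 0 := by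
      intro h; apply hwi; simp [hwM, h]
    have hτi : τ.symm i ≤ k := by
      by_contra h
      push_neg at h
      apply hz
      have := hx3 (τ.symm i) h
      rwa [Equiv.apply_symm_apply] at this
    calc μ i = (μ ∘ τ) (τ.symm i) := by simp
      _ ≤ (μ ∘ τ) k := Tuple.monotone_sort μ hτi
  calc d (σ k) ≤ f qC := hlow
    _ = f (2⁻¹ * (qA + qB)) := by rw [hqC]
    _ ≤ 2⁻¹ * (f qA + f qB) := hmid
    _ ≤ 2⁻¹ * (fqA + fqB) := by
        have := add_le_add hJA hJB
        nlinarith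
    _ = qM := hqM.symm
    _ ≤ μ (τ k) := hupp

/-- **Inequality (3) of Bourin.** If `f` is convex and monotone and `A, B` are Hermitian,
then there is a unitary `U` with `f((A+B)/2) ≤ U ((f(A)+f(B))/2) Uᴴ` in the Loewner
order. -/
theorem cfc_mean_le_unitary_conj_of_monotone
    {n : ℕ} (f : ℝ → ℝ) (hf : ConvexOn ℝ Set.univ f)
    (hmono : Monotone f ∨ Antitone f)
    (A B : Matrix (Fin n) (Fin n) ℂ) (hA : A.IsHermitian) (hB : B.IsHermitian) :
    ∃ U : Matrix (Fin n) (Fin n) ℂ, U ∈ Matrix.unitaryGroup (Fin n) ℂ ∧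
      (U * ((2 : ℝ)⁻¹ • (hA.cfc f + hB.cfc f)) * Uᴴ -
        (isHermitian_half_smul (hA.add hB)).cfc f).PosSemidef := by
  classical
  have hC : ((2:ℝ)⁻¹ • (A + B)).IsHermitian := isHermitian_half_smul (hA.add hB)
  have hM : ((2:ℝ)⁻¹ • (hA.cfc f + hB.cfc f)).IsHermitian :=
    isHermitian_half_smul ((isHermitian_cfc hA f).add (isHermitian_cfc hB f))
  set d : Fin n → ℝ := f ∘ hC.eigenvalues with hd
  set μ : Fin n → ℝ := hM.eigenvalues with hμ
  have key : ∀ k : Fin n, d (Tuple.sort d k) ≤ μ (Tuple.sort μ k) :=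
    fun k => key_sorted_le f hf hmono hA hB hC hM rfl rfl k
  set ρ : Equiv.Perm (Fin n) := (Tuple.sort d).symm.trans (Tuple.sort μ) with hρdef
  have hρ : ∀ i, d i ≤ μ (ρ i) := by
    intro i
    have := key ((Tuple.sort d).symm i)
    simpa [hρdef] using this
  set V : Matrix (Fin n) (Fin n) ℂ := (hC.eigenvectorUnitary : Matrix (Fin n) (Fin n) ℂ)
    with hVdef
  set Wm : Matrix (Fin n) (Fin n) ℂ := (hM.eigenvectorUnitary : Matrix (Fin n) (Fin n) ℂ)
    with hWdef
  set W' : Matrix (Fin n) (Fin n) ℂ := Wm.submatrix id ρ with hW'def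
  have hW'star : star W' = Wmᴴ.submatrix ρ id := by
    rw [hW'def, star_eq_conjTranspose, conjTranspose_submatrix]
  have hW'unit : W' ∈ Matrix.unitaryGroup (Fin n) ℂ := by
    rw [Matrix.mem_unitaryGroup_iff']
    rw [hW'star, hW'def, ← star_eq_conjTranspose,
      ← Matrix.submatrix_mul (star Wm) Wm ρ id ρ Function.bijective_id,
      Matrix.mem_unitaryGroup_iff'.mp hM.eigenvectorUnitary.2, Matrix.submatrix_one_equiv]
  set D : Matrix (Fin n) (Fin n) ℂ := diagonal (Complex.ofReal ∘ d) with hDdef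
  set D' : Matrix (Fin n) (Fin n) ℂ := diagonal (Complex.ofReal ∘ (μ ∘ ρ)) with hD'def
  have hMdecomp : W' * D' * star W' = (2:ℝ)⁻¹ • (hA.cfc f + hB.cfc f) := by
    have e1 : D' = (diagonal (Complex.ofReal ∘ μ)).submatrix ρ ρ := by
      rw [Matrix.submatrix_diagonal _ _ ρ.injective, hD'def]
      rfl
    rw [e1, hW'star, hW'def,
      ← Matrix.submatrix_mul Wm (diagonal (Complex.ofReal ∘ μ)) id ρ ρ ρ.bijective,
      ← star_eq_conjTranspose,
      ← Matrix.submatrix_mul (Wm * diagonal (Complex.ofReal ∘ μ)) (star Wm) id ρ id ρ.bijective,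
      Matrix.submatrix_id_id]
    exact (hM.spectral_theorem).symm
  refine ⟨V * star W', mul_mem hC.eigenvectorUnitary.2 (Unitary.star_mem hW'unit), ?_⟩
  have hUconj : (V * star W')ᴴ = W' * star V := by
    rw [← star_eq_conjTranspose, StarMul.star_mul, star_star]
  have hUMU : (V * star W') * ((2:ℝ)⁻¹ • (hA.cfc f + hB.cfc f)) * (V * star W')ᴴ
      = V * D' * star V := by
    rw [hUconj, ← hMdecomp]
    have h1 : star W' * W' = 1 := Matrix.mem_unitaryGroup_iff'.mp hW'unit
    calc V * star W' * (W' * D' * star W') * (W' * star V)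
        = V * ((star W' * W') * (D' * ((star W' * W') * star V))) := by
          simp only [Matrix.mul_assoc]
      _ = V * D' * star V := by rw [h1, Matrix.one_mul, Matrix.one_mul, ← Matrix.mul_assoc]
  rw [hUMU]
  have hcfcC : (isHermitian_half_smul (hA.add hB)).cfc f = V * D * star V := rfl
  rw [hcfcC]
  have hdiff : V * D' * star V - V * D * star V
      = V * diagonal (fun i => (Complex.ofReal (μ (ρ i) - d i))) * star V := by
    have hdiag : diagonal (fun i => (Complex.ofReal (μ (ρ i) - d i))) = D' - D := by
      rw [hD'def, hDdef, Matrix.diagonal_sub]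
      congr 1
      funext i
      simp
    rw [hdiag, Matrix.mul_sub, Matrix.sub_mul]
  rw [hdiff, star_eq_conjTranspose]
  apply Matrix.PosSemidef.mul_mul_conjTranspose_same
  apply Matrix.PosSemidef.diagonal
  intro i
  simp only [Pi.zero_apply]
  rw [Complex.zero_le_real]
  have := hρ i
  linarith
end
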